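/- arXiv:1809.01861 — 6 statements merged into one kernel-verified Lean document; each statement's English description precedes it below -/
import Mathlib

section
/- If a permutation x in S_m has disjoint cycle lengths e_1,...,e_r and y in S_n has disjoint cycle lengths f_1,...,f_s, then the permutation (x,y) acting on the product set of size mn has, for each pair (i,j), exactly gcd(e_i,f_j) cycles of length lcm(e_i,f_j), and these are all of its cycles. -/
open Equiv

/-- The full cycle type of a permutation of a finite type: the multiset of lengths of its
disjoint cycles, *including* fixed points as cycles of length 1. -/
noncomputable def fullCycleType {α : Type*} [Fintype α] (σ : Equiv.Perm α) : Multiset ℕ := by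
  classical exact σ.cycleType + Multiset.replicate (Fintype.card α - σ.support.card) 1

namespace ProductPermAux

open Equiv.Perm Finset

/-- Divisor-restricted sum of a multiset. -/
def divSum (M : Multiset ℕ) (d : ℕ) : ℕ := (M.filter (· ∣ d)).sum

lemma divSum_add (M N : Multiset ℕ) (d : ℕ) :
    divSum (M + N) d = divSum M d + divSum N d := by
  simp [divSum, Multiset.filter_add]

lemma divSum_cons (a : ℕ) (M : Multiset ℕ) (d : ℕ) :
    divSum (a ::ₘ M) d = (if a ∣ d then a else 0) + divSum M d := by
  by_cases h : a ∣ d <;> simp [divSum, Multiset.filter_cons, h]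

lemma divSum_zero (d : ℕ) : divSum 0 d = 0 := rfl

lemma divSum_replicate (k a d : ℕ) :
    divSum (Multiset.replicate k a) d = if a ∣ d then k * a else 0 := by
  induction k with
  | zero => simp [divSum]
  | succ k ih =>
      rw [Multiset.replicate_succ, divSum_cons, ih]
      by_cases h : a ∣ d <;> simp [h, Nat.succ_mul, Nat.add_comm]

lemma divSum_map {β : Type*} (f : β → ℕ) (s : Multiset β) (d : ℕ) :
    divSum (s.map f) d = (s.map fun b => if f b ∣ d then f b else 0).sum := by
  induction s using Multiset.induction with
  | empty => simp [divSum]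
  | cons a s ih => rw [Multiset.map_cons, divSum_cons, ih, Multiset.map_cons, Multiset.sum_cons]

lemma divSum_bind {β : Type*} (s : Multiset β) (g : β → Multiset ℕ) (d : ℕ) :
    divSum (s.bind g) d = (s.map fun b => divSum (g b) d).sum := by
  induction s using Multiset.induction with
  | empty => simp [divSum]
  | cons a s ih => rw [Multiset.cons_bind, divSum_add, ih, Multiset.map_cons, Multiset.sum_cons]

lemma single_le_divSum {a d : ℕ} {M : Multiset ℕ} (haM : a ∈ M) (had : a ∣ d) :
    a ≤ divSum M d :=
  Multiset.single_le_sum (fun x _ => Nat.zero_le x) a (Multiset.mem_filter.2 ⟨haM, had⟩)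

/-- A multiset of positive naturals is determined by its divisor-restricted sums. -/
lemma eq_of_divSum_eq : ∀ k (M N : Multiset ℕ), Multiset.card M ≤ k →
    (∀ a ∈ M, 0 < a) → (∀ a ∈ N, 0 < a) → (∀ d, divSum M d = divSum N d) → M = N := by
  intro k
  induction k with
  | zero =>
      intro M N hcard _ hN h
      have hM0 : M = 0 := Multiset.card_eq_zero.mp (Nat.le_zero.mp hcard)
      subst hM0
      by_contra hne
      obtain ⟨a, ha⟩ := Multiset.exists_mem_of_ne_zero (Ne.symm hne)
      have := single_le_divSum ha (dvd_refl a)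
      rw [← h a, divSum_zero] at this
      exact absurd this (by simpa using (hN a ha).ne')
  | succ k ih =>
      intro M N hcard hM hN h
      by_cases hM0 : M = 0
      · subst hM0
        by_contra hne
        obtain ⟨a, ha⟩ := Multiset.exists_mem_of_ne_zero (Ne.symm hne)
        have := single_le_divSum ha (dvd_refl a)
        rw [← h a, divSum_zero] at this
        exact absurd this (by simpa using (hN a ha).ne')
      · -- take the minimal element of M + N
        have hMN : M + N ≠ 0 := by
          intro h0
          apply hM0
          have := congrArg Multiset.card h0
          simp only [Multiset.card_add, Multiset.card_zero] at this
          exact Multiset.card_eq_zero.mp (by omega)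
        have hT : (M + N).toFinset.Nonempty := by
          obtain ⟨a, ha⟩ := Multiset.exists_mem_of_ne_zero hMN
          exact ⟨a, Multiset.mem_toFinset.2 ha⟩
        set a := (M + N).toFinset.min' hT with ha_def
        have haMN : a ∈ M + N := Multiset.mem_toFinset.1 ((M + N).toFinset.min'_mem hT)
        have ha_min : ∀ b ∈ M + N, a ≤ b := fun b hb =>
          (M + N).toFinset.min'_le b (Multiset.mem_toFinset.2 hb)
        have ha_pos : 0 < a := by
          rcases Multiset.mem_add.1 haMN with h' | h'
          · exact hM a h'
          · exact hN a h'
        have key : ∀ K : Multiset ℕ, (∀ b ∈ K, b ∈ M + N) →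
            divSum K a = K.count a * a := by
          intro K hK
          have h1 : K.filter (· ∣ a) = K.filter (· = a) := by
            apply Multiset.filter_congr
            intro b hb
            constructor
            · intro hdvd
              exact le_antisymm (Nat.le_of_dvd ha_pos hdvd) (ha_min b (hK b hb))
            · rintro rfl; exact dvd_refl a
          rw [divSum, h1, Multiset.filter_eq', Multiset.sum_replicate, smul_eq_mul,
            Nat.mul_comm]
        have hMa := key M (fun b hb => Multiset.mem_add.2 (Or.inl hb))
        have hNa := key N (fun b hb => Multiset.mem_add.2 (Or.inr hb))
        have hcount : M.count a = N.count a := by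
          have := h a
          rw [hMa, hNa] at this
          exact Nat.eq_of_mul_eq_mul_right ha_pos this
        have haM : a ∈ M := by
          rcases Multiset.mem_add.1 haMN with h' | h'
          · exact h'
          · rw [← Multiset.count_pos, hcount, Multiset.count_pos]; exact h'
        have haN : a ∈ N := by
          rw [← Multiset.count_pos, ← hcount, Multiset.count_pos]; exact haM
        have hMe : M = a ::ₘ M.erase a := (Multiset.cons_erase haM).symm
        have hNe : N = a ::ₘ N.erase a := (Multiset.cons_erase haN).symm
        have herase : M.erase a = N.erase a := by
          apply ih
          · have : Multiset.card M = Multiset.card (M.erase a) + 1 := by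
              rw [hMe]; simp
            omega
          · exact fun b hb => hM b (Multiset.mem_of_mem_erase hb)
          · exact fun b hb => hN b (Multiset.mem_of_mem_erase hb)
          · intro d
            have hMd := h d
            rw [hMe, hNe, divSum_cons, divSum_cons] at hMd
            omega
        rw [hMe, hNe, herase]

variable {α : Type*} [Fintype α] [DecidableEq α]

lemma fullCycleType_eq (σ : Equiv.Perm α) :
    fullCycleType σ
      = σ.cycleType + Multiset.replicate (Fintype.card α - σ.support.card) 1 := by
  unfold fullCycleType
  congr!

/-- Entries of the full cycle type are positive. -/
lemma fullCycleType_pos (σ : Equiv.Perm α) : ∀ a ∈ fullCycleType σ, 0 < a := by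
  intro a ha
  rw [fullCycleType_eq, Multiset.mem_add] at ha
  rcases ha with h | h
  · exact lt_trans Nat.one_pos (Equiv.Perm.one_lt_of_mem_cycleType h)
  · rw [Multiset.eq_of_mem_replicate h]; exact Nat.one_pos

/-- The key pointwise fact: for a point in the support of a cycle factor `c` of `σ`,
being fixed by `σ ^ d` is equivalent to `c.support.card ∣ d`. -/
lemma pow_fixed_iff {σ c : Equiv.Perm α} (hc : c ∈ σ.cycleFactorsFinset) {p : α}
    (hp : p ∈ c.support) : (σ ^ d) p = p ↔ c.support.card ∣ d := by
  have hcyc : c.IsCycle := (Equiv.Perm.mem_cycleFactorsFinset_iff.1 hc).1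
  have hco : σ.cycleOf p = c := (Equiv.Perm.cycle_is_cycleOf hp hc).symm
  have hne : c p ≠ p := Equiv.Perm.mem_support.1 hp
  have h1 : (σ ^ d) p = (c ^ d) p := by
    rw [← hco, Equiv.Perm.cycleOf_pow_apply_self]
  rw [h1, ← hcyc.pow_eq_one_iff' hne, ← orderOf_dvd_iff_pow_eq_one, hcyc.orderOf]

/-- The divisor-restricted sum of the full cycle type counts fixed points of powers. -/
lemma divSum_fullCycleType (σ : Equiv.Perm α) (d : ℕ) :
    divSum (fullCycleType σ) d = (Finset.univ.filter fun p => (σ ^ d) p = p).card := by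
  classical
  rw [fullCycleType_eq, divSum_add, divSum_replicate, if_pos (one_dvd d), Nat.mul_one]
  -- split fixed points into support and complement
  have hsplit : (Finset.univ.filter fun p => (σ ^ d) p = p)
      = (σ.support.filter fun p => (σ ^ d) p = p) ∪ σ.supportᶜ := by
    ext p
    simp only [Finset.mem_filter, Finset.mem_union, Finset.mem_compl, Finset.mem_univ,
      true_and]
    by_cases hp : p ∈ σ.support
    · simp [hp]
    · simp only [hp, not_false_iff, or_true, iff_true]
      have : σ p = p := Equiv.Perm.notMem_support.1 hp
      exact Equiv.Perm.pow_apply_eq_self_of_apply_eq_self this d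
  have hdisj : Disjoint (σ.support.filter fun p => (σ ^ d) p = p) σ.supportᶜ :=
    Disjoint.mono_left (Finset.filter_subset _ _) disjoint_compl_right
  rw [hsplit, Finset.card_union_of_disjoint hdisj, Finset.card_compl]
  have hmain : divSum σ.cycleType d = (σ.support.filter fun p => (σ ^ d) p = p).card := by
    have hbi : (σ.support.filter fun p => (σ ^ d) p = p)
        = σ.cycleFactorsFinset.biUnion
            (fun c => if c.support.card ∣ d then c.support else ∅) := by
      ext p
      simp only [Finset.mem_filter, Finset.mem_biUnion]
      constructor
      · rintro ⟨hp, hfix⟩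
        obtain ⟨c, hc, hpc⟩ :=
          Equiv.Perm.mem_support_iff_mem_support_of_mem_cycleFactorsFinset.1 hp
        refine ⟨c, hc, ?_⟩
        rw [if_pos ((pow_fixed_iff hc hpc).1 hfix)]
        exact hpc
      · rintro ⟨c, hc, hpc⟩
        by_cases hdvd : c.support.card ∣ d
        · rw [if_pos hdvd] at hpc
          exact ⟨Equiv.Perm.mem_cycleFactorsFinset_support_le hc hpc,
            (pow_fixed_iff hc hpc).2 hdvd⟩
        · rw [if_neg hdvd] at hpc
          exact absurd hpc (Finset.notMem_empty p)
    rw [hbi, Finset.card_biUnion]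
    · rw [Equiv.Perm.cycleType_def, divSum_map]
      rw [Finset.sum_congr rfl (fun c (_ : c ∈ σ.cycleFactorsFinset) => by
        by_cases hdvd : c.support.card ∣ d <;>
          simp [Function.comp, hdvd] : ∀ c ∈ σ.cycleFactorsFinset,
            (if c.support.card ∣ d then c.support else ∅).card
              = (if (Finset.card ∘ Equiv.Perm.support) c ∣ d
                  then (Finset.card ∘ Equiv.Perm.support) c else 0))]
      rfl
    · intro c₁ h₁ c₂ h₂ hne
      have := (Equiv.Perm.cycleFactorsFinset_pairwise_disjoint σ) h₁ h₂ hne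
      have hds := Equiv.Perm.Disjoint.disjoint_support this
      by_cases h1 : c₁.support.card ∣ d <;> by_cases h2 : c₂.support.card ∣ d <;>
        simp [Function.onFun, h1, h2, hds]
  rw [hmain]

lemma divSum_id_eq (M : Multiset ℕ) (d : ℕ) :
    divSum M d = (M.map fun a => if a ∣ d then a else 0).sum := by
  simpa using divSum_map id M d

lemma rhs_divSum (Mx My : Multiset ℕ) (d : ℕ) :
    divSum (Mx.bind fun e => My.bind fun f =>
        Multiset.replicate (Nat.gcd e f) (Nat.lcm e f)) d
      = divSum Mx d * divSum My d := by
  rw [divSum_bind]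
  have hterm : ∀ e f : ℕ, divSum (Multiset.replicate (Nat.gcd e f) (Nat.lcm e f)) d
      = (if e ∣ d then e else 0) * (if f ∣ d then f else 0) := by
    intro e f
    rw [divSum_replicate]
    by_cases he : e ∣ d <;> by_cases hf : f ∣ d
    · rw [if_pos (Nat.lcm_dvd he hf), if_pos he, if_pos hf, Nat.gcd_mul_lcm]
    · rw [if_neg (fun h => hf ((Nat.dvd_lcm_right e f).trans h)), if_pos he, if_neg hf,
        Nat.mul_zero]
    · rw [if_neg (fun h => he ((Nat.dvd_lcm_left e f).trans h)), if_neg he, Nat.zero_mul]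
    · rw [if_neg (fun h => he ((Nat.dvd_lcm_left e f).trans h)), if_neg he, Nat.zero_mul]
  have hinner : ∀ e : ℕ,
      divSum (My.bind fun f => Multiset.replicate (Nat.gcd e f) (Nat.lcm e f)) d
        = (if e ∣ d then e else 0) * divSum My d := by
    intro e
    rw [divSum_bind, Multiset.map_congr rfl (fun f _ => hterm e f),
      Multiset.sum_map_mul_left, ← divSum_id_eq]
  rw [Multiset.map_congr rfl (fun e _ => hinner e), Multiset.sum_map_mul_right, ← divSum_id_eq]

lemma prodCongr_pow {β γ : Type*} (x : Equiv.Perm β) (y : Equiv.Perm γ) (d : ℕ) :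
    (Equiv.prodCongr x y) ^ d = Equiv.prodCongr (x ^ d) (y ^ d) := by
  induction d with
  | zero =>
      ext p <;> simp
  | succ d ih =>
      rw [pow_succ, pow_succ, pow_succ, ih]
      ext p <;> simp [Equiv.Perm.mul_apply]

lemma card_fixed_prod {β γ : Type*} [Fintype β] [Fintype γ] [DecidableEq β] [DecidableEq γ]
    (x : Equiv.Perm β) (y : Equiv.Perm γ) (d : ℕ) :
    (Finset.univ.filter fun p : β × γ => ((Equiv.prodCongr x y) ^ d) p = p).card
      = (Finset.univ.filter fun a => (x ^ d) a = a).card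
        * (Finset.univ.filter fun b => (y ^ d) b = b).card := by
  have h : (Finset.univ.filter fun p : β × γ => ((Equiv.prodCongr x y) ^ d) p = p)
      = (Finset.univ.filter fun a => (x ^ d) a = a) ×ˢ
          (Finset.univ.filter fun b => (y ^ d) b = b) := by
    ext ⟨a, b⟩
    simp [prodCongr_pow, Prod.ext_iff]
  rw [h, Finset.card_product]

end ProductPermAux

/-- If `x ∈ S_m` has disjoint cycle lengths `e_1, ..., e_r` and `y ∈ S_n` has disjoint cycle
lengths `f_1, ..., f_s` (fixed points counting as cycles of length 1), then the product
permutation `(x, y)` of the `m·n` points has, for each pair `(i, j)`, exactly `gcd (e_i, f_j)`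
cycles of length `lcm (e_i, f_j)`, and these are all of its cycles. -/
theorem product_perm_cycleType (m n : ℕ) (x : Equiv.Perm (Fin m)) (y : Equiv.Perm (Fin n)) :
    fullCycleType (Equiv.prodCongr x y) =
      (fullCycleType x).bind fun e =>
        (fullCycleType y).bind fun f =>
          Multiset.replicate (Nat.gcd e f) (Nat.lcm e f) := by
  classical
  apply ProductPermAux.eq_of_divSum_eq
    (Multiset.card (fullCycleType (Equiv.prodCongr x y))) _ _ le_rfl
  · exact ProductPermAux.fullCycleType_pos _
  · intro a ha
    rw [Multiset.mem_bind] at ha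
    obtain ⟨e, he, ha⟩ := ha
    rw [Multiset.mem_bind] at ha
    obtain ⟨f, hf, ha⟩ := ha
    rw [Multiset.eq_of_mem_replicate ha]
    exact Nat.pos_of_ne_zero (Nat.lcm_ne_zero
      (ProductPermAux.fullCycleType_pos x e he).ne'
      (ProductPermAux.fullCycleType_pos y f hf).ne')
  · intro d
    rw [ProductPermAux.divSum_fullCycleType, ProductPermAux.card_fixed_prod,
      ← ProductPermAux.divSum_fullCycleType, ← ProductPermAux.divSum_fullCycleType,
      ProductPermAux.rhs_divSum]
end

section
/- For a permutation σ in S_n, define ind(σ) = n minus the number of disjoint cycles of σ (counting fixed points as cycles). Then for any x in S_m and y in S_n, the index of the product permutation (x,y) on mn points satisfies ind(x,y) ≥ n·ind(x), with equality when y is the identity; in particular, the minimal index of an element of S_m × S_n (in its product action on mn points) projecting to a given x in S_m is attained by (x,1) and equals n·ind(x). -/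
/-- The index of a permutation of a finite set of size `N`: `N` minus the number of its
disjoint cycles (fixed points counting as cycles). This equals the sum over the nontrivial
cycles of (length - 1). -/
noncomputable def permIndex {α : Type*} [Fintype α] (σ : Equiv.Perm α) : ℕ := by
  classical exact σ.cycleType.sum - σ.cycleType.card

namespace PermIndexAux

open Equiv Equiv.Perm

variable {α β : Type*}

/-- The setoid of the `SameCycle` relation. -/
def cSetoid (σ : Equiv.Perm α) : Setoid α :=
  ⟨σ.SameCycle, ⟨fun a => Equiv.Perm.SameCycle.refl σ a, fun h => h.symm,
    fun h1 h2 => h1.trans h2⟩⟩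

/-- The quotient by the `SameCycle` relation: the set of orbits of `⟨σ⟩`. -/
def Q (σ : Equiv.Perm α) : Type _ := Quotient (cSetoid σ)

instance [Finite α] (σ : Equiv.Perm α) : Finite (Q σ) :=
  Quotient.finite _

lemma sameCycle_fix {σ : Equiv.Perm α} {a b : α} (h : σ a = a) (hs : σ.SameCycle a b) :
    a = b := by
  obtain ⟨i, hi⟩ := hs
  rw [← hi, Equiv.Perm.zpow_apply_eq_self_of_apply_eq_self h]

lemma card_eq [Fintype α] (σ : Equiv.Perm α) :
    permIndex σ + Nat.card (Q σ) = Fintype.card α := by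
  classical
  -- an explicit bijection between orbits and fixed points ⊕ nontrivial cycles
  have e : Q σ ≃ ({a : α // σ a = a} ⊕ {c : Equiv.Perm α // c ∈ σ.cycleFactorsFinset}) := by
    refine
      { toFun := Quotient.lift (fun a =>
          if h : σ a = a then Sum.inl ⟨a, h⟩
          else Sum.inr ⟨σ.cycleOf a,
            Equiv.Perm.cycleOf_mem_cycleFactorsFinset_iff.2 (Equiv.Perm.mem_support.2 h)⟩) ?_
        invFun := Sum.elim (fun a => Quotient.mk _ a.1)
          (fun c => Quotient.mk _
            ((Equiv.Perm.mem_cycleFactorsFinset_iff.mp c.2).1.choose))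
        left_inv := ?_
        right_inv := ?_ }
    · intro a b hab
      change σ.SameCycle a b at hab
      by_cases ha : σ a = a
      · have : a = b := sameCycle_fix ha hab
        subst this; rfl
      · by_cases hb : σ b = b
        · have hba : b = a := sameCycle_fix hb hab.symm
          subst hba; rfl
        · simp only [dif_neg ha, dif_neg hb]
          exact congrArg _ (Subtype.ext hab.cycleOf_eq)
    · refine Quotient.ind (fun a => ?_)
      by_cases ha : σ a = a
      · simp only [Quotient.lift_mk, dif_pos ha, Sum.elim_inl]; rfl
      · simp only [Quotient.lift_mk, dif_neg ha, Sum.elim_inr]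
        apply Quotient.sound
        have hmemf : σ.cycleOf a ∈ σ.cycleFactorsFinset :=
          Equiv.Perm.cycleOf_mem_cycleFactorsFinset_iff.2 (Equiv.Perm.mem_support.2 ha)
        have hc := (Equiv.Perm.mem_cycleFactorsFinset_iff.mp hmemf).1
        obtain ⟨hx, -⟩ := hc.choose_spec
        have hmem : hc.choose ∈ (σ.cycleOf a).support := Equiv.Perm.mem_support.2 hx
        have h2 := (Equiv.Perm.mem_support_cycleOf_iff.mp hmem).1
        exact h2.symm
    · rintro (⟨a, ha⟩ | ⟨c, hc⟩)
      · exact dif_pos ha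
      · show (if h : σ _ = _ then _ else _) = _
        have hcyc := (Equiv.Perm.mem_cycleFactorsFinset_iff.mp hc).1
        obtain ⟨hb1, -⟩ := hcyc.choose_spec
        have hbsup : hcyc.choose ∈ c.support := Equiv.Perm.mem_support.2 hb1
        have hb2 : c hcyc.choose = σ hcyc.choose :=
          (Equiv.Perm.mem_cycleFactorsFinset_iff.mp hc).2 hcyc.choose hbsup
        have hbσ : σ hcyc.choose ≠ hcyc.choose := by rw [← hb2]; exact hb1
        rw [dif_neg hbσ]
        have hcc : c = σ.cycleOf hcyc.choose := Equiv.Perm.cycle_is_cycleOf hbsup hc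
        exact congrArg _ (Subtype.ext hcc.symm)
  have hcard : Nat.card (Q σ) =
      (Fintype.card α - σ.support.card) + σ.cycleFactorsFinset.card := by
    rw [Nat.card_congr e, Nat.card_sum]
    congr 1
    · rw [Nat.card_eq_fintype_card, Fintype.card_subtype]
      have : Finset.univ.filter (fun a => σ a = a) = σ.supportᶜ := by
        ext a; simp [Equiv.Perm.mem_support]
      rw [this, Finset.card_compl]
    · rw [Nat.card_eq_fintype_card, Fintype.card_coe]
  have hsum : σ.cycleType.sum = σ.support.card := Equiv.Perm.sum_cycleType σ
  have hctcard : Multiset.card σ.cycleType = σ.cycleFactorsFinset.card := by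
    rw [Equiv.Perm.cycleType_def, Multiset.card_map]; rfl
  have hle : Multiset.card σ.cycleType ≤ σ.cycleType.sum := by
    have := Multiset.card_nsmul_le_sum (s := σ.cycleType) (a := 1)
      (fun x hx => le_trans (by norm_num) (Equiv.Perm.two_le_of_mem_cycleType hx))
    simpa using this
  have hle2 : σ.support.card ≤ Fintype.card α := Finset.card_le_univ _
  have hpi : permIndex σ = σ.cycleType.sum - Multiset.card σ.cycleType := by
    unfold permIndex
    congr 1
  omega

/-- `prodCongr` as a monoid hom. -/
def pcHom : Equiv.Perm α × Equiv.Perm β →* Equiv.Perm (α × β) where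
  toFun p := p.1.prodCongr p.2
  map_one' := by
    apply Equiv.ext; rintro ⟨a, b⟩; rfl
  map_mul' p q := by
    apply Equiv.ext; rintro ⟨a, b⟩; rfl

lemma prodCongr_zpow (x : Equiv.Perm α) (y : Equiv.Perm β) (i : ℤ) :
    ((x.prodCongr y : Equiv.Perm (α × β))) ^ i = ((x ^ i).prodCongr (y ^ i)) := by
  have h := map_zpow (pcHom (α := α) (β := β)) (x, y) i
  simp only [pcHom, MonoidHom.coe_mk, OneHom.coe_mk] at h
  have h1 : ((x, y) ^ i).1 = x ^ i := rfl
  have h2 : ((x, y) ^ i).2 = y ^ i := rfl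
  rw [h1, h2] at h
  exact h.symm

lemma sc_fst {x : Equiv.Perm α} {y : Equiv.Perm β} {p q : α × β}
    (h : Equiv.Perm.SameCycle (x.prodCongr y) p q) : x.SameCycle p.1 q.1 := by
  obtain ⟨i, hi⟩ := h
  rw [prodCongr_zpow] at hi
  exact ⟨i, congrArg Prod.fst hi⟩

lemma sc_snd_one {x : Equiv.Perm α} {p q : α × β}
    (h : Equiv.Perm.SameCycle (x.prodCongr (1 : Equiv.Perm β)) p q) : p.2 = q.2 := by
  obtain ⟨i, hi⟩ := h
  rw [prodCongr_zpow] at hi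
  have h2 := congrArg Prod.snd hi
  simpa using h2

/-- Projection of orbits. -/
def pi (x : Equiv.Perm α) (y : Equiv.Perm β) :
    Q (x.prodCongr y : Equiv.Perm (α × β)) → Q x :=
  Quotient.lift (fun p => (Quotient.mk (cSetoid x) p.1 : Q x))
    (fun _ _ h => Quotient.sound (sc_fst h))

lemma exists_snd (x : Equiv.Perm α) (y : Equiv.Perm β)
    (c : Q (x.prodCongr y : Equiv.Perm (α × β))) :
    ∃ b : β, (Quotient.mk (cSetoid (x.prodCongr y : Equiv.Perm (α × β)))
      ((pi x y c).out, b)) = c := by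
  obtain ⟨p, rfl⟩ := Quotient.exists_rep c
  have hpi : pi x y (Quotient.mk (cSetoid (x.prodCongr y : Equiv.Perm (α × β))) p)
      = Quotient.mk (cSetoid x) p.1 := rfl
  have hmk : Quotient.mk (cSetoid x)
      ((pi x y (Quotient.mk (cSetoid (x.prodCongr y : Equiv.Perm (α × β))) p)).out)
      = Quotient.mk (cSetoid x) p.1 := by
    exact (Quotient.out_eq _).trans hpi
  have hout : x.SameCycle
      ((pi x y (Quotient.mk (cSetoid (x.prodCongr y : Equiv.Perm (α × β))) p)).out) p.1 :=
    Quotient.exact hmk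
  obtain ⟨i, hi⟩ := hout
  refine ⟨(y ^ (-i)) p.2, ?_⟩
  apply Quotient.sound
  refine ⟨i, ?_⟩
  rw [prodCongr_zpow]
  have h2 : (y ^ i) ((y ^ (-i)) p.2) = p.2 := by
    rw [← Equiv.Perm.mul_apply, ← zpow_add]
    simp
  exact Prod.ext hi h2

lemma card_Q_prod_le [Fintype α] [Fintype β] (x : Equiv.Perm α) (y : Equiv.Perm β) :
    Nat.card (Q (x.prodCongr y : Equiv.Perm (α × β))) ≤ Nat.card (Q x) * Fintype.card β := by
  classical
  have hJinj : Function.Injective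
      (fun c : Q (x.prodCongr y : Equiv.Perm (α × β)) =>
        ((pi x y c, (exists_snd x y c).choose) : Q x × β)) := by
    intro c c' h
    have h1 : pi x y c = pi x y c' := congrArg Prod.fst h
    have h2 : (exists_snd x y c).choose = (exists_snd x y c').choose :=
      congrArg Prod.snd h
    have hc := (exists_snd x y c).choose_spec
    have hc' := (exists_snd x y c').choose_spec
    exact hc.symm.trans ((congrArg (Quotient.mk (cSetoid (x.prodCongr y : Equiv.Perm (α × β))))
          (Prod.ext (congrArg Quotient.out h1) h2)).trans hc')
  calc Nat.card (Q (x.prodCongr y : Equiv.Perm (α × β))) ≤ Nat.card (Q x × β) :=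
        Nat.card_le_card_of_injective _ hJinj
    _ = Nat.card (Q x) * Fintype.card β := by
        rw [Nat.card_prod, Nat.card_eq_fintype_card (α := β)]

/-- With `y = 1`, orbits of the product are exactly (orbit of `x`) × point. -/
def QOne (x : Equiv.Perm α) (β : Type*) :
    Q (x.prodCongr (1 : Equiv.Perm β) : Equiv.Perm (α × β)) ≃ Q x × β where
  toFun := Quotient.lift (fun p : α × β => ((Quotient.mk (cSetoid x) p.1 : Q x), p.2))
    (fun p q h => by
      have h1 : x.SameCycle p.1 q.1 := sc_fst h
      have h2 : p.2 = q.2 := sc_snd_one h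
      exact Prod.ext (Quotient.sound h1) h2)
  invFun := fun pb => Quotient.lift
    (fun a => (Quotient.mk (cSetoid (x.prodCongr (1 : Equiv.Perm β) : Equiv.Perm (α × β)))
      (a, pb.2)))
    (fun a a' h => by
      obtain ⟨i, hi⟩ := (h : x.SameCycle a a')
      refine Quotient.sound ⟨i, ?_⟩
      rw [prodCongr_zpow]
      have : ((1 : Equiv.Perm β) ^ i) pb.2 = pb.2 := by simp
      exact Prod.ext hi this) pb.1
  left_inv := Quotient.ind fun p => rfl
  right_inv := fun pb => by
    obtain ⟨q, b⟩ := pb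
    obtain ⟨a, rfl⟩ := Quotient.exists_rep q
    rfl

lemma card_Q_one [Fintype α] [Fintype β] (x : Equiv.Perm α) :
    Nat.card (Q (x.prodCongr (1 : Equiv.Perm β) : Equiv.Perm (α × β)))
      = Nat.card (Q x) * Fintype.card β := by
  rw [Nat.card_congr (QOne x β), Nat.card_prod, Nat.card_eq_fintype_card (α := β)]

end PermIndexAux

/-- For `x ∈ S_m` and `y ∈ S_n`, the index of the product permutation `(x, y)` of the `m·n`
points satisfies `ind (x, y) ≥ n · ind x`, with equality when `y = 1`; in particular the
minimal index of an element of `S_m × S_n` (product action on `m·n` points) projecting to a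
given `x ∈ S_m` is attained at `(x, 1)` and equals `n · ind x`. -/
theorem product_perm_index (m n : ℕ) (x : Equiv.Perm (Fin m)) :
    (∀ y : Equiv.Perm (Fin n), n * permIndex x ≤ permIndex (Equiv.prodCongr x y)) ∧
    permIndex (Equiv.prodCongr x (1 : Equiv.Perm (Fin n))) = n * permIndex x := by
  classical
  have hAx : permIndex x + Nat.card (PermIndexAux.Q x) = m := by
    have := PermIndexAux.card_eq x
    simpa using this
  have hcardmn : Fintype.card (Fin m × Fin n) = m * n := by simp
  constructor
  · intro y
    have hAxy : permIndex (Equiv.prodCongr x y)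
        + Nat.card (PermIndexAux.Q (x.prodCongr y : Equiv.Perm (Fin m × Fin n)))
        = m * n := by
      have := PermIndexAux.card_eq (x.prodCongr y : Equiv.Perm (Fin m × Fin n))
      rwa [hcardmn] at this
    have hB : Nat.card (PermIndexAux.Q (x.prodCongr y : Equiv.Perm (Fin m × Fin n)))
        ≤ Nat.card (PermIndexAux.Q x) * n := by
      have := PermIndexAux.card_Q_prod_le x y
      simpa using this
    have key : n * permIndex x + n * Nat.card (PermIndexAux.Q x)
        = permIndex (Equiv.prodCongr x y)
          + Nat.card (PermIndexAux.Q (x.prodCongr y : Equiv.Perm (Fin m × Fin n))) := by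
      rw [← Nat.mul_add, hAx, hAxy, Nat.mul_comm]
    refine Nat.le_of_add_le_add_right (b := n * Nat.card (PermIndexAux.Q x)) ?_
    calc n * permIndex x + n * Nat.card (PermIndexAux.Q x)
        = permIndex (Equiv.prodCongr x y)
          + Nat.card (PermIndexAux.Q (x.prodCongr y : Equiv.Perm (Fin m × Fin n))) := key
      _ ≤ permIndex (Equiv.prodCongr x y) + Nat.card (PermIndexAux.Q x) * n :=
          Nat.add_le_add_left hB _
      _ = permIndex (Equiv.prodCongr x y) + n * Nat.card (PermIndexAux.Q x) := by
          rw [Nat.mul_comm]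
  · have hAx1 : permIndex (Equiv.prodCongr x (1 : Equiv.Perm (Fin n)))
        + Nat.card (PermIndexAux.Q
            (x.prodCongr (1 : Equiv.Perm (Fin n)) : Equiv.Perm (Fin m × Fin n)))
        = m * n := by
      have := PermIndexAux.card_eq
        (x.prodCongr (1 : Equiv.Perm (Fin n)) : Equiv.Perm (Fin m × Fin n))
      rwa [hcardmn] at this
    have hB : Nat.card (PermIndexAux.Q
          (x.prodCongr (1 : Equiv.Perm (Fin n)) : Equiv.Perm (Fin m × Fin n)))
        = Nat.card (PermIndexAux.Q x) * n := by
      have := PermIndexAux.card_Q_one (β := Fin n) x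
      simpa using this
    have key : n * permIndex x + n * Nat.card (PermIndexAux.Q x) = m * n := by
      rw [← Nat.mul_add, hAx, Nat.mul_comm]
    rw [hB] at hAx1
    have hfin : permIndex (Equiv.prodCongr x (1 : Equiv.Perm (Fin n)))
        + n * Nat.card (PermIndexAux.Q x)
        = n * permIndex x + n * Nat.card (PermIndexAux.Q x) := by
      rw [key, ← hAx1, Nat.mul_comm n (Nat.card (PermIndexAux.Q x))]
    exact Nat.add_right_cancel hfin
end

section
/- For transitive permutation groups G ≤ S_m and H ≤ S_n, the generator index of the product group G × H acting on mn points equals max(n·gi(G), m·gi(H)), where gi denotes the generator index. -/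
/-- The generator index of a permutation group `G`: the minimum over all generating sets `S`
of `G` of the maximal index of an element of `S`. -/
noncomputable def genIndex {α : Type*} [Fintype α] (G : Subgroup (Equiv.Perm α)) : ℕ :=
  sInf {k | ∃ S : Set (Equiv.Perm α), Subgroup.closure S = G ∧ ∀ σ ∈ S, permIndex σ ≤ k}

/-- The product action homomorphism `S_m × S_n →* S_{mn}`. -/
def prodPermHom (m n : ℕ) :
    Equiv.Perm (Fin m) × Equiv.Perm (Fin n) →* Equiv.Perm (Fin m × Fin n) where
  toFun p := Equiv.prodCongr p.1 p.2
  map_one' := Equiv.ext fun _ => rfl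
  map_mul' _ _ := Equiv.ext fun _ => rfl

open Equiv Equiv.Perm

/-! ### Orbit-counting machinery -/

/-- The setoid on `α` whose classes are the cycles (orbits) of `σ`. -/
def sameCycleSetoid {α : Type*} (σ : Equiv.Perm α) : Setoid α :=
  ⟨σ.SameCycle, SameCycle.refl σ, fun h => h.symm, fun h h' => h.trans h'⟩

/-- The type of orbits of a permutation. -/
def OrbQ {α : Type*} (σ : Equiv.Perm α) : Type _ := Quotient (sameCycleSetoid σ)

/-- The number of orbits (cycles, including fixed points) of a permutation. -/
noncomputable def numOrb {α : Type*} (σ : Equiv.Perm α) : ℕ := Nat.card (OrbQ σ)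

instance orbQFinite {α : Type*} [Finite α] (σ : Equiv.Perm α) : Finite (OrbQ σ) :=
  Quotient.finite _

lemma orbQ_sound {α : Type*} {σ : Equiv.Perm α} {x y : α} (h : σ.SameCycle x y) :
    (Quotient.mk (sameCycleSetoid σ) x) = Quotient.mk (sameCycleSetoid σ) y :=
  Quotient.sound h

lemma orbQ_exact {α : Type*} {σ : Equiv.Perm α} {x y : α}
    (h : (Quotient.mk (sameCycleSetoid σ) x) = Quotient.mk (sameCycleSetoid σ) y) :
    σ.SameCycle x y := Quotient.exact h

lemma numOrb_le_card {α : Type*} [Fintype α] (σ : Equiv.Perm α) :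
    numOrb σ ≤ Fintype.card α := by
  rw [numOrb, ← Nat.card_eq_fintype_card]
  exact Nat.card_le_card_of_surjective _ (Quotient.mk_surjective (s := sameCycleSetoid σ))

/-- The index of a permutation is the number of points minus the number of orbits. -/
lemma permIndex_eq {α : Type*} [Fintype α] (σ : Equiv.Perm α) :
    permIndex σ = Fintype.card α - numOrb σ := by
  classical
  have wd : ∀ x y : α, σ.SameCycle x y →
      (if h : σ x = x then (Sum.inl ⟨x, h⟩ : {x : α // σ x = x} ⊕ {c // c ∈ σ.cycleFactorsFinset})
       else Sum.inr ⟨σ.cycleOf x, cycleOf_mem_cycleFactorsFinset_iff.2 (mem_support.2 h)⟩) =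
      (if h : σ y = y then Sum.inl ⟨y, h⟩
       else Sum.inr ⟨σ.cycleOf y, cycleOf_mem_cycleFactorsFinset_iff.2 (mem_support.2 h)⟩) := by
    intro x y hxy
    by_cases hx : σ x = x
    · obtain rfl : x = y := hxy.eq_of_left hx
      rfl
    · have hy : ¬ σ y = y := fun hy => hx (by
        have h2 := hxy.symm.eq_of_left hy; rw [← h2]; exact hy)
      rw [dif_neg hx, dif_neg hy]
      exact congrArg Sum.inr (Subtype.ext hxy.cycleOf_eq)
  let F : OrbQ σ → ({x : α // σ x = x} ⊕ {c // c ∈ σ.cycleFactorsFinset}) :=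
    Quotient.lift _ wd
  have hbij : Function.Bijective F := by
    constructor
    · intro q q'
      induction q using Quotient.inductionOn with | h x =>
      induction q' using Quotient.inductionOn with | h y =>
      intro hxy
      change (if h : σ x = x then (Sum.inl ⟨x, h⟩ : {x : α // σ x = x} ⊕ {c // c ∈ σ.cycleFactorsFinset}) else Sum.inr ⟨σ.cycleOf x, cycleOf_mem_cycleFactorsFinset_iff.2 (mem_support.2 h)⟩) = (if h : σ y = y then (Sum.inl ⟨y, h⟩ : {x : α // σ x = x} ⊕ {c // c ∈ σ.cycleFactorsFinset}) else Sum.inr ⟨σ.cycleOf y, cycleOf_mem_cycleFactorsFinset_iff.2 (mem_support.2 h)⟩) at hxy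
      by_cases hx : σ x = x <;> by_cases hy : σ y = y
      · rw [dif_pos hx, dif_pos hy] at hxy
        obtain rfl : x = y := congrArg Subtype.val (Sum.inl.inj hxy)
        rfl
      · rw [dif_pos hx, dif_neg hy] at hxy; exact absurd hxy (by simp)
      · rw [dif_neg hx, dif_pos hy] at hxy; exact absurd hxy (by simp)
      · rw [dif_neg hx, dif_neg hy] at hxy
        apply orbQ_sound
        have hcyc : σ.cycleOf x = σ.cycleOf y := congrArg Subtype.val (Sum.inr.inj hxy)
        have hyy : y ∈ (σ.cycleOf y).support :=
          mem_support_cycleOf_iff.2 ⟨SameCycle.refl σ y, mem_support.2 hy⟩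
        rw [← hcyc] at hyy
        exact (mem_support_cycleOf_iff.1 hyy).1
    · rintro (⟨x, hx⟩ | ⟨c, hc⟩)
      · exact ⟨Quotient.mk _ x, dif_pos hx⟩
      · have hcyc := (mem_cycleFactorsFinset_iff.1 hc).1
        obtain ⟨x, hx⟩ := hcyc.nonempty_support
        have hxs : x ∈ σ.support := mem_cycleFactorsFinset_support_le hc hx
        refine ⟨Quotient.mk _ x, ?_⟩
        change (if h : σ x = x then (Sum.inl ⟨x, h⟩ : {x : α // σ x = x} ⊕ {c // c ∈ σ.cycleFactorsFinset}) else Sum.inr ⟨σ.cycleOf x, cycleOf_mem_cycleFactorsFinset_iff.2 (mem_support.2 h)⟩) = _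
        rw [dif_neg (mem_support.1 hxs)]
        exact congrArg Sum.inr (Subtype.ext (cycle_is_cycleOf hx hc).symm)
  have hcard : numOrb σ = (Fintype.card α - σ.support.card) + σ.cycleType.card := by
    rw [numOrb, Nat.card_eq_of_bijective F hbij, Nat.card_sum]
    congr 1
    · rw [Nat.card_eq_fintype_card, Fintype.card_subtype]
      have h2 := Finset.card_filter_add_card_filter_not (s := (Finset.univ : Finset α))
        (fun x => σ x = x)
      have hsupp : σ.support = Finset.univ.filter (fun x => ¬ σ x = x) := by
        ext x; simp [mem_support]
      rw [← hsupp, Finset.card_univ] at h2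
      omega
    · rw [Nat.card_eq_fintype_card, Fintype.card_coe, cycleType]
      simp
  have hsum := sum_cycleType σ
  have hle : σ.support.card ≤ Fintype.card α := Finset.card_le_univ _
  have hnum : numOrb σ ≤ Fintype.card α := numOrb_le_card σ
  rw [permIndex.eq_1, hcard, hsum]
  omega
/-- `prodCongr` as a monoid hom (general version of `prodPermHom`). -/
def pcHom (α β : Type*) : Equiv.Perm α × Equiv.Perm β →* Equiv.Perm (α × β) where
  toFun p := Equiv.prodCongr p.1 p.2
  map_one' := Equiv.ext fun _ => rfl
  map_mul' _ _ := Equiv.ext fun _ => rfl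

lemma prodCongr_zpow {α β : Type*} (g : Equiv.Perm α) (h : Equiv.Perm β) (k : ℤ) :
    (Equiv.prodCongr g h) ^ k = Equiv.prodCongr (g ^ k) (h ^ k) := by
  have := map_zpow (pcHom α β) (g, h) k
  simpa [pcHom, Prod.pow_def] using this.symm

lemma sameCycle_prodCongr {α β : Type*} {g : Equiv.Perm α} {h : Equiv.Perm β}
    {x x' : α} {y y' : β} :
    Equiv.Perm.SameCycle (Equiv.prodCongr g h) (x, y) (x', y') ↔
      ∃ k : ℤ, (g ^ k) x = x' ∧ (h ^ k) y = y' := by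
  constructor
  · rintro ⟨k, hk⟩
    rw [prodCongr_zpow] at hk
    exact ⟨k, congrArg Prod.fst hk, congrArg Prod.snd hk⟩
  · rintro ⟨k, hk1, hk2⟩
    exact ⟨k, by rw [prodCongr_zpow]; exact Prod.ext hk1 hk2⟩

section
variable {α β : Type*} [Finite α] [Finite β] (g : Equiv.Perm α) (h : Equiv.Perm β)

lemma numOrb_prodCongr_le_left :
    numOrb (Equiv.prodCongr g h) ≤ numOrb g * Nat.card β := by
  classical
  set σ := Equiv.prodCongr g h with hσ
  have hpr : ∀ p q : α × β, (sameCycleSetoid σ).r p q → (sameCycleSetoid g).r p.1 q.1 := by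
    rintro ⟨x, y⟩ ⟨x', y'⟩ hpq
    obtain ⟨k, hk1, _⟩ := sameCycle_prodCongr.1 hpq
    exact ⟨k, hk1⟩
  let pr : OrbQ σ → OrbQ g := Quotient.map Prod.fst hpr
  have hex : ∀ q : OrbQ σ, ∃ y : β, Quotient.mk (sameCycleSetoid σ) ((pr q).out, y) = q := by
    intro q
    induction q using Quotient.inductionOn with | h p =>
    have hout : (Quotient.mk (sameCycleSetoid g) p.1) =
        Quotient.mk (sameCycleSetoid g) ((pr (Quotient.mk _ p)).out) := by
      show _ = Quotient.mk _ (Quotient.out (Quotient.map Prod.fst hpr (Quotient.mk _ p)))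
      rw [Quotient.out_eq]
      rfl
    obtain ⟨k, hk⟩ := orbQ_exact hout
    refine ⟨(h ^ k) p.2, (orbQ_sound ?_).symm⟩
    exact ⟨k, by rw [prodCongr_zpow]; exact Prod.ext hk rfl⟩
  let F : OrbQ σ → OrbQ g × β := fun q => (pr q, (hex q).choose)
  have hinj : Function.Injective F := by
    intro q q' hqq
    have e1 := (hex q).choose_spec
    have e2 := (hex q').choose_spec
    have h1 : pr q = pr q' := congrArg Prod.fst hqq
    have h2 : (hex q).choose = (hex q').choose := congrArg Prod.snd hqq
    rw [← e1, ← e2]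
    exact congrArg (Quotient.mk _) (Prod.ext (congrArg Quotient.out h1) h2)
  calc numOrb σ ≤ Nat.card (OrbQ g × β) := Nat.card_le_card_of_injective F hinj
  _ = numOrb g * Nat.card β := by rw [Nat.card_prod]; rfl

lemma numOrb_prodCongr_le_right :
    numOrb (Equiv.prodCongr g h) ≤ numOrb h * Nat.card α := by
  classical
  set σ := Equiv.prodCongr g h with hσ
  have hpr : ∀ p q : α × β, (sameCycleSetoid σ).r p q → (sameCycleSetoid h).r p.2 q.2 := by
    rintro ⟨x, y⟩ ⟨x', y'⟩ hpq
    obtain ⟨k, _, hk2⟩ := sameCycle_prodCongr.1 hpq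
    exact ⟨k, hk2⟩
  let pr : OrbQ σ → OrbQ h := Quotient.map Prod.snd hpr
  have hex : ∀ q : OrbQ σ, ∃ x : α, Quotient.mk (sameCycleSetoid σ) (x, (pr q).out) = q := by
    intro q
    induction q using Quotient.inductionOn with | h p =>
    have hout : (Quotient.mk (sameCycleSetoid h) p.2) =
        Quotient.mk (sameCycleSetoid h) ((pr (Quotient.mk _ p)).out) := by
      show _ = Quotient.mk _ (Quotient.out (Quotient.map Prod.snd hpr (Quotient.mk _ p)))
      rw [Quotient.out_eq]
      rfl
    obtain ⟨k, hk⟩ := orbQ_exact hout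
    refine ⟨(g ^ k) p.1, (orbQ_sound ?_).symm⟩
    exact ⟨k, by rw [prodCongr_zpow]; exact Prod.ext rfl hk⟩
  let F : OrbQ σ → OrbQ h × α := fun q => (pr q, (hex q).choose)
  have hinj : Function.Injective F := by
    intro q q' hqq
    have e1 := (hex q).choose_spec
    have e2 := (hex q').choose_spec
    have h1 : pr q = pr q' := congrArg Prod.fst hqq
    have h2 : (hex q).choose = (hex q').choose := congrArg Prod.snd hqq
    rw [← e1, ← e2]
    exact congrArg (Quotient.mk _) (Prod.ext h2 (congrArg Quotient.out h1))
  calc numOrb σ ≤ Nat.card (OrbQ h × α) := Nat.card_le_card_of_injective F hinj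
  _ = numOrb h * Nat.card α := by rw [Nat.card_prod]; rfl

lemma numOrb_prodCongr_one_right :
    numOrb (Equiv.prodCongr g (1 : Equiv.Perm β)) = numOrb g * Nat.card β := by
  classical
  set σ := Equiv.prodCongr g (1 : Equiv.Perm β) with hσ
  refine le_antisymm (numOrb_prodCongr_le_left g 1) ?_
  have hwd : ∀ (y : β) (x x' : α), (sameCycleSetoid g).r x x' →
      (Quotient.mk (sameCycleSetoid σ) (x, y)) = Quotient.mk (sameCycleSetoid σ) (x', y) := by
    rintro y x x' ⟨k, hk⟩
    exact orbQ_sound ⟨k, by rw [prodCongr_zpow]; exact Prod.ext hk (by simp)⟩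
  let F : OrbQ g × β → OrbQ σ := fun p =>
    Quotient.lift (fun x => Quotient.mk (sameCycleSetoid σ) (x, p.2)) (hwd p.2) p.1
  have hinj : Function.Injective F := by
    rintro ⟨q, y⟩ ⟨q', y'⟩ hqq
    induction q using Quotient.inductionOn with | h x =>
    induction q' using Quotient.inductionOn with | h x' =>
    obtain ⟨k, hk⟩ := orbQ_exact (hqq : Quotient.mk (sameCycleSetoid σ) (x, y) = _)
    rw [prodCongr_zpow] at hk
    have hk1 : (g ^ k) x = x' := congrArg Prod.fst hk
    have hk2 : y = y' := by simpa using congrArg Prod.snd hk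
    exact Prod.ext (orbQ_sound ⟨k, hk1⟩) hk2
  have := Nat.card_le_card_of_injective F hinj
  rw [Nat.card_prod] at this
  exact this

lemma numOrb_prodCongr_one_left :
    numOrb (Equiv.prodCongr (1 : Equiv.Perm α) h) = numOrb h * Nat.card α := by
  classical
  set σ := Equiv.prodCongr (1 : Equiv.Perm α) h with hσ
  refine le_antisymm (numOrb_prodCongr_le_right 1 h) ?_
  have hwd : ∀ (x : α) (y y' : β), (sameCycleSetoid h).r y y' →
      (Quotient.mk (sameCycleSetoid σ) (x, y)) = Quotient.mk (sameCycleSetoid σ) (x, y')  := by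
    rintro x y y' ⟨k, hk⟩
    exact orbQ_sound ⟨k, by rw [prodCongr_zpow]; exact Prod.ext (by simp) hk⟩
  let F : OrbQ h × α → OrbQ σ := fun p =>
    Quotient.lift (fun y => Quotient.mk (sameCycleSetoid σ) (p.2, y)) (hwd p.2) p.1
  have hinj : Function.Injective F := by
    rintro ⟨q, x⟩ ⟨q', x'⟩ hqq
    induction q using Quotient.inductionOn with | h y =>
    induction q' using Quotient.inductionOn with | h y' =>
    obtain ⟨k, hk⟩ := orbQ_exact (hqq : Quotient.mk (sameCycleSetoid σ) (x, y) = _)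
    rw [prodCongr_zpow] at hk
    have hk2 : (h ^ k) y = y' := congrArg Prod.snd hk
    have hk1 : x = x' := by simpa using congrArg Prod.fst hk
    exact Prod.ext (orbQ_sound ⟨k, hk2⟩) hk1
  have := Nat.card_le_card_of_injective F hinj
  rw [Nat.card_prod] at this
  exact this
end

/-! ### Index of permutations of products of `Fin`s -/

lemma permIndex_prodCongr_one_right (m n : ℕ) (g : Equiv.Perm (Fin m)) :
    permIndex (Equiv.prodCongr g (1 : Equiv.Perm (Fin n))) = n * permIndex g := by
  have hO : numOrb g ≤ m := by simpa using numOrb_le_card g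
  rw [permIndex_eq, permIndex_eq, numOrb_prodCongr_one_right, Fintype.card_prod,
    Fintype.card_fin, Fintype.card_fin, Nat.card_eq_fintype_card, Fintype.card_fin,
    Nat.mul_comm n (m - numOrb g), Nat.sub_mul]

lemma permIndex_prodCongr_one_left (m n : ℕ) (h : Equiv.Perm (Fin n)) :
    permIndex (Equiv.prodCongr (1 : Equiv.Perm (Fin m)) h) = m * permIndex h := by
  have hO : numOrb h ≤ n := by simpa using numOrb_le_card h
  rw [permIndex_eq, permIndex_eq, numOrb_prodCongr_one_left, Fintype.card_prod,
    Fintype.card_fin, Fintype.card_fin, Nat.card_eq_fintype_card, Fintype.card_fin,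
    Nat.mul_comm m (n - numOrb h), Nat.sub_mul, Nat.mul_comm n m]

lemma permIndex_prodCongr_ge_left (m n : ℕ) (g : Equiv.Perm (Fin m)) (h : Equiv.Perm (Fin n)) :
    n * permIndex g ≤ permIndex (Equiv.prodCongr g h) := by
  have h1 : numOrb (Equiv.prodCongr g h) ≤ numOrb g * n := by
    simpa using numOrb_prodCongr_le_left g h
  rw [permIndex_eq, permIndex_eq, Fintype.card_prod, Fintype.card_fin, Fintype.card_fin]
  calc n * (m - numOrb g) = (m - numOrb g) * n := Nat.mul_comm _ _
  _ = m * n - numOrb g * n := Nat.sub_mul _ _ _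
  _ ≤ m * n - numOrb (Equiv.prodCongr g h) := Nat.sub_le_sub_left h1 _

lemma permIndex_prodCongr_ge_right (m n : ℕ) (g : Equiv.Perm (Fin m)) (h : Equiv.Perm (Fin n)) :
    m * permIndex h ≤ permIndex (Equiv.prodCongr g h) := by
  have h1 : numOrb (Equiv.prodCongr g h) ≤ numOrb h * m := by
    simpa using numOrb_prodCongr_le_right g h
  rw [permIndex_eq, permIndex_eq, Fintype.card_prod, Fintype.card_fin, Fintype.card_fin]
  calc m * (n - numOrb h) = (n - numOrb h) * m := Nat.mul_comm _ _
  _ = n * m - numOrb h * m := Nat.sub_mul _ _ _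
  _ = m * n - numOrb h * m := by rw [Nat.mul_comm m n]
  _ ≤ m * n - numOrb (Equiv.prodCongr g h) := Nat.sub_le_sub_left h1 _

/-! ### Basic facts about `genIndex` -/

lemma permIndex_le_card {α : Type*} [Fintype α] (σ : Equiv.Perm α) :
    permIndex σ ≤ Fintype.card α := by
  rw [permIndex_eq]; exact Nat.sub_le _ _

lemma genIndex_nonempty {α : Type*} [Fintype α] (G : Subgroup (Equiv.Perm α)) :
    {k | ∃ S : Set (Equiv.Perm α), Subgroup.closure S = G ∧ ∀ σ ∈ S, permIndex σ ≤ k}.Nonempty :=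
  ⟨Fintype.card α, (G : Set (Equiv.Perm α)), Subgroup.closure_eq G,
    fun σ _ => permIndex_le_card σ⟩

lemma genIndex_le {α : Type*} [Fintype α] {G : Subgroup (Equiv.Perm α)} {k : ℕ}
    (S : Set (Equiv.Perm α)) (h1 : Subgroup.closure S = G) (h2 : ∀ σ ∈ S, permIndex σ ≤ k) :
    genIndex G ≤ k :=
  Nat.sInf_le ⟨S, h1, h2⟩

lemma genIndex_spec {α : Type*} [Fintype α] (G : Subgroup (Equiv.Perm α)) :
    ∃ S : Set (Equiv.Perm α), Subgroup.closure S = G ∧ ∀ σ ∈ S, permIndex σ ≤ genIndex G :=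
  Nat.sInf_mem (genIndex_nonempty G)

lemma genIndex_subsingleton {α : Type*} [Fintype α] [Subsingleton α]
    (G : Subgroup (Equiv.Perm α)) : genIndex G = 0 := by
  have hone : ∀ x : Equiv.Perm α, x = 1 := fun x => Subsingleton.elim x 1
  have hbot : G = ⊥ := by
    ext x; simp [hone x, Subgroup.one_mem]
  refine Nat.le_zero.1 (genIndex_le ∅ ?_ (by simp))
  rw [Subgroup.closure_empty, hbot]

/-! ### The main theorem -/

/-- For transitive permutation groups `G ≤ S_m` and `H ≤ S_n`, the generator index of the
product `G × H` in its product action on `m·n` points equals `max (n·gi G) (m·gi H)`. -/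
theorem genIndex_prod (m n : ℕ) (G : Subgroup (Equiv.Perm (Fin m)))
    (H : Subgroup (Equiv.Perm (Fin n)))
    (hG : ∀ a b : Fin m, ∃ g ∈ G, g a = b) (hH : ∀ a b : Fin n, ∃ h ∈ H, h a = b) :
    genIndex (Subgroup.map (prodPermHom m n) (G.prod H)) =
      max (n * genIndex G) (m * genIndex H) := by
  classical
  rcases Nat.eq_zero_or_pos m with rfl | hm
  · haveI : Subsingleton (Fin 0 × Fin n) := ⟨fun a _ => a.1.elim0⟩
    rw [genIndex_subsingleton, genIndex_subsingleton G]
    simp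
  rcases Nat.eq_zero_or_pos n with rfl | hn
  · haveI : Subsingleton (Fin m × Fin 0) := ⟨fun a _ => a.2.elim0⟩
    rw [genIndex_subsingleton, genIndex_subsingleton H]
    simp
  -- the product action hom is injective
  have hminj : Function.Injective (prodPermHom m n) := by
    intro p q hpq
    obtain ⟨x⟩ := Fin.pos_iff_nonempty.1 hm
    obtain ⟨y⟩ := Fin.pos_iff_nonempty.1 hn
    refine Prod.ext ?_ ?_
    · exact Equiv.ext fun a => congrArg Prod.fst (Equiv.ext_iff.mp hpq (a, y))
    · exact Equiv.ext fun b => congrArg Prod.snd (Equiv.ext_iff.mp hpq (x, b))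
  set P := Subgroup.map (prodPermHom m n) (G.prod H) with hP
  obtain ⟨SG, hSGc, hSGb⟩ := genIndex_spec G
  obtain ⟨SH, hSHc, hSHb⟩ := genIndex_spec H
  apply le_antisymm
  · -- upper bound: use generators (g,1) and (1,h)
    apply genIndex_le ((prodPermHom m n) ''
      ((MonoidHom.inl _ _) '' SG ∪ (MonoidHom.inr _ _) '' SH))
    · rw [← MonoidHom.map_closure, Subgroup.closure_union, ← MonoidHom.map_closure,
        ← MonoidHom.map_closure, hSGc, hSHc, hP]
      congr 1
      apply le_antisymm
      · refine sup_le ?_ ?_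
        · rintro _ ⟨g, hg, rfl⟩
          exact Subgroup.mem_prod.2 ⟨hg, H.one_mem⟩
        · rintro _ ⟨h, hh, rfl⟩
          exact Subgroup.mem_prod.2 ⟨G.one_mem, hh⟩
      · exact Subgroup.prod_le_iff.2 ⟨le_sup_left, le_sup_right⟩
    · rintro σ ⟨p, hp, rfl⟩
      rcases hp with ⟨g, hg, rfl⟩ | ⟨h, hh, rfl⟩
      · have : permIndex ((prodPermHom m n) (MonoidHom.inl _ _ g)) = n * permIndex g :=
          permIndex_prodCongr_one_right m n g
        rw [this]
        exact le_max_of_le_left (Nat.mul_le_mul_left n (hSGb g hg))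
      · have : permIndex ((prodPermHom m n) (MonoidHom.inr _ _ h)) = m * permIndex h :=
          permIndex_prodCongr_one_left m n h
        rw [this]
        exact le_max_of_le_right (Nat.mul_le_mul_left m (hSHb h hh))
  · -- lower bound
    refine le_csInf (genIndex_nonempty P) ?_
    rintro k ⟨S, hSc, hSb⟩
    set T : Set (Equiv.Perm (Fin m) × Equiv.Perm (Fin n)) :=
      {p | p ∈ G.prod H ∧ (prodPermHom m n) p ∈ S} with hT
    have hTim : (prodPermHom m n) '' T = S := by
      apply Set.Subset.antisymm
      · rintro _ ⟨p, ⟨_, hp2⟩, rfl⟩; exact hp2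
      · intro s hs
        have hsP : s ∈ P := hSc ▸ Subgroup.subset_closure hs
        obtain ⟨p, hp, rfl⟩ := Subgroup.mem_map.1 hsP
        exact ⟨p, ⟨hp, hs⟩, rfl⟩
    have hTc : Subgroup.closure T = G.prod H := by
      apply Subgroup.map_injective hminj
      rw [MonoidHom.map_closure, hTim, hSc, hP]
    have hGc : Subgroup.closure (Prod.fst '' T) = G := by
      have h0 : Prod.fst '' T =
          ⇑(MonoidHom.fst (Equiv.Perm (Fin m)) (Equiv.Perm (Fin n))) '' T := rfl
      rw [h0, ← MonoidHom.map_closure, hTc]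
      ext x
      constructor
      · rintro hx
        obtain ⟨p, hp, rfl⟩ := Subgroup.mem_map.1 hx
        exact (Subgroup.mem_prod.1 hp).1
      · intro hx
        exact Subgroup.mem_map.2 ⟨(x, 1), Subgroup.mem_prod.2 ⟨hx, H.one_mem⟩, rfl⟩
    have hHc : Subgroup.closure (Prod.snd '' T) = H := by
      have h0 : Prod.snd '' T =
          ⇑(MonoidHom.snd (Equiv.Perm (Fin m)) (Equiv.Perm (Fin n))) '' T := rfl
      rw [h0, ← MonoidHom.map_closure, hTc]
      ext x
      constructor
      · rintro hx
        obtain ⟨p, hp, rfl⟩ := Subgroup.mem_map.1 hx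
        exact (Subgroup.mem_prod.1 hp).2
      · intro hx
        exact Subgroup.mem_map.2 ⟨(1, x), Subgroup.mem_prod.2 ⟨G.one_mem, hx⟩, rfl⟩
    have hkG : genIndex G ≤ k / n := by
      refine genIndex_le _ hGc ?_
      rintro g ⟨p, ⟨hpGH, hpS⟩, rfl⟩
      have h1 : n * permIndex p.1 ≤ permIndex ((prodPermHom m n) p) :=
        permIndex_prodCongr_ge_left m n p.1 p.2
      have h2 := hSb _ hpS
      rw [Nat.le_div_iff_mul_le hn, Nat.mul_comm]
      omega
    have hkH : genIndex H ≤ k / m := by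
      refine genIndex_le _ hHc ?_
      rintro h ⟨p, ⟨hpGH, hpS⟩, rfl⟩
      have h1 : m * permIndex p.2 ≤ permIndex ((prodPermHom m n) p) :=
        permIndex_prodCongr_ge_right m n p.1 p.2
      have h2 := hSb _ hpS
      rw [Nat.le_div_iff_mul_le hm, Nat.mul_comm]
      omega
    refine max_le ?_ ?_
    · calc n * genIndex G ≤ n * (k / n) := Nat.mul_le_mul_left n hkG
      _ ≤ k := by rw [Nat.mul_comm]; exact Nat.div_mul_le_self k n
    · calc m * genIndex H ≤ m * (k / m) := Nat.mul_le_mul_left m hkH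
      _ ≤ k := by rw [Nat.mul_comm]; exact Nat.div_mul_le_self k m
end

section
/- The generator index of the dihedral group D_n in its natural degree-n action equals (n−1)/2 if n is odd and n/2 if n is even; moreover the set of reflections is a generating set attaining this bound. -/
/-- The ngonRotation `x ↦ 1 + x` of the vertices of a regular `n`-gon. -/
def ngonRotation (n : ℕ) : Equiv.Perm (ZMod n) := Equiv.addLeft 1

/-- The ngonReflection `x ↦ a - x` of the vertices of a regular `n`-gon. -/
def ngonReflection (n : ℕ) (a : ZMod n) : Equiv.Perm (ZMod n) :=
  Function.Involutive.toPerm (fun x => a - x) (fun x => by ring)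

/-- The dihedral group of order `2n` in its natural degree-`n` action on the vertices of a
regular `n`-gon, generated by a ngonRotation and a ngonReflection. -/
def dihedralSubgroup (n : ℕ) : Subgroup (Equiv.Perm (ZMod n)) :=
  Subgroup.closure {ngonRotation n, ngonReflection n 0}

namespace DihedralAux

section general
variable {α : Type*} [Fintype α] [DecidableEq α]

lemma permIndex_eq (σ : Equiv.Perm α) : permIndex σ = σ.cycleType.sum - σ.cycleType.card := by
  simp only [permIndex]
  congr!

lemma half_support_le_permIndex (σ : Equiv.Perm α) : σ.support.card / 2 ≤ permIndex σ := by
  have hsum : σ.cycleType.sum = σ.support.card := Equiv.Perm.sum_cycleType σ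
  have h2 : σ.cycleType.card • 2 ≤ σ.cycleType.sum :=
    Multiset.card_nsmul_le_sum (fun c hc => Equiv.Perm.two_le_of_mem_cycleType hc)
  rw [permIndex_eq]
  simp only [smul_eq_mul] at h2
  omega

lemma permIndex_involution (σ : Equiv.Perm α) (h : σ * σ = 1) :
    permIndex σ = σ.support.card / 2 := by
  have hord : orderOf σ ∣ 2 := orderOf_dvd_of_pow_eq_one (by rw [pow_two]; exact h)
  have hlcm := σ.lcm_cycleType
  have h2 : ∀ c ∈ σ.cycleType, c = 2 := by
    intro c hc
    have h1 : 2 ≤ c := Equiv.Perm.two_le_of_mem_cycleType hc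
    have h3 : c ∣ 2 := dvd_trans (Multiset.dvd_lcm hc) (hlcm ▸ hord)
    have := Nat.le_of_dvd (by norm_num) h3
    omega
  have hrep : σ.cycleType = Multiset.replicate σ.cycleType.card 2 :=
    Multiset.eq_replicate.2 ⟨rfl, h2⟩
  have hsum : σ.cycleType.sum = σ.support.card := Equiv.Perm.sum_cycleType σ
  have hs2 : σ.cycleType.sum = σ.cycleType.card * 2 := by
    conv_lhs => rw [hrep]
    simp [Multiset.sum_replicate, mul_comm]
  rw [permIndex_eq]
  omega

end general

variable {n : ℕ}

lemma refl_apply (a x : ZMod n) : ngonReflection n a x = a - x := rfl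

lemma addLeft_mul (j k : ZMod n) :
    Equiv.addLeft j * Equiv.addLeft k = Equiv.addLeft (j + k) := by
  ext x; simp [Equiv.Perm.mul_apply]

lemma refl_mul_refl (a b : ZMod n) :
    ngonReflection n a * ngonReflection n b = Equiv.addLeft (a - b) := by
  ext x; simp [Equiv.Perm.mul_apply, refl_apply]; ring

lemma addLeft_mul_refl (j a : ZMod n) :
    Equiv.addLeft j * ngonReflection n a = ngonReflection n (j + a) := by
  ext x; simp [Equiv.Perm.mul_apply, refl_apply]; ring

lemma refl_mul_addLeft (a j : ZMod n) :
    ngonReflection n a * Equiv.addLeft j = ngonReflection n (a - j) := by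
  ext x; simp [Equiv.Perm.mul_apply, refl_apply]; ring

lemma addLeft_zero_eq_one : (Equiv.addLeft (0 : ZMod n)) = 1 := by
  ext x; simp

lemma refl_sq (a : ZMod n) : ngonReflection n a * ngonReflection n a = 1 := by
  rw [refl_mul_refl]; simp [addLeft_zero_eq_one]

lemma refl_inv (a : ZMod n) : (ngonReflection n a)⁻¹ = ngonReflection n a :=
  inv_eq_of_mul_eq_one_right (refl_sq a)

lemma addLeft_inv (j : ZMod n) : (Equiv.addLeft j)⁻¹ = Equiv.addLeft (-j) := by
  apply inv_eq_of_mul_eq_one_right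
  rw [addLeft_mul]; simp [addLeft_zero_eq_one]

lemma rot_pow (k : ℕ) : (ngonRotation n) ^ k = Equiv.addLeft (k : ZMod n) := by
  induction k with
  | zero => simp [addLeft_zero_eq_one]
  | succ k ih =>
    rw [pow_succ, ih, ngonRotation, addLeft_mul]
    push_cast
    ring_nf

lemma addLeft_mem [NeZero n] (j : ZMod n) : Equiv.addLeft j ∈ dihedralSubgroup n := by
  have h : Equiv.addLeft j = (ngonRotation n) ^ j.val := by
    rw [rot_pow, ZMod.natCast_rightInverse j]
  rw [h]
  exact pow_mem (Subgroup.subset_closure (by simp)) _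

lemma refl_mem [NeZero n] (a : ZMod n) : ngonReflection n a ∈ dihedralSubgroup n := by
  have h : ngonReflection n a = Equiv.addLeft a * ngonReflection n 0 := by
    rw [addLeft_mul_refl, add_zero]
  rw [h]
  exact mul_mem (addLeft_mem a) (Subgroup.subset_closure (by simp))

lemma closure_reflections [NeZero n] :
    Subgroup.closure {σ : Equiv.Perm (ZMod n) | ∃ a : ZMod n, σ = ngonReflection n a} =
      dihedralSubgroup n := by
  apply le_antisymm
  · rw [Subgroup.closure_le]
    rintro σ ⟨a, rfl⟩
    exact refl_mem a
  · rw [dihedralSubgroup, Subgroup.closure_le]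
    rintro σ hσ
    simp only [Set.mem_insert_iff, Set.mem_singleton_iff] at hσ
    rcases hσ with rfl | rfl
    · have h : ngonRotation n = ngonReflection n 1 * ngonReflection n 0 := by
        rw [refl_mul_refl, sub_zero, ngonRotation]
      rw [h]
      exact mul_mem (Subgroup.subset_closure ⟨1, rfl⟩) (Subgroup.subset_closure ⟨0, rfl⟩)
    · exact Subgroup.subset_closure ⟨0, rfl⟩

/-- The set of rotations and reflections, as a subgroup. -/
def dihT (n : ℕ) : Subgroup (Equiv.Perm (ZMod n)) where
  carrier := {σ | (∃ j, σ = Equiv.addLeft j) ∨ ∃ a, σ = ngonReflection n a}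
  one_mem' := Or.inl ⟨0, addLeft_zero_eq_one.symm⟩
  mul_mem' := by
    rintro _ _ (⟨j, rfl⟩ | ⟨a, rfl⟩) (⟨k, rfl⟩ | ⟨b, rfl⟩)
    · exact Or.inl ⟨j + k, addLeft_mul j k⟩
    · exact Or.inr ⟨j + b, addLeft_mul_refl j b⟩
    · exact Or.inr ⟨a - k, refl_mul_addLeft a k⟩
    · exact Or.inl ⟨a - b, refl_mul_refl a b⟩
  inv_mem' := by
    rintro _ (⟨j, rfl⟩ | ⟨a, rfl⟩)
    · exact Or.inl ⟨-j, addLeft_inv j⟩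
    · exact Or.inr ⟨a, refl_inv a⟩

lemma mem_dihT {σ : Equiv.Perm (ZMod n)} (h : σ ∈ dihedralSubgroup n) :
    (∃ j, σ = Equiv.addLeft j) ∨ ∃ a, σ = ngonReflection n a := by
  have hle : dihedralSubgroup n ≤ dihT n := by
    rw [dihedralSubgroup, Subgroup.closure_le]
    rintro σ hσ
    simp only [Set.mem_insert_iff, Set.mem_singleton_iff] at hσ
    rcases hσ with rfl | rfl
    · exact Or.inl ⟨1, rfl⟩
    · exact Or.inr ⟨0, rfl⟩
  exact hle h

/-- The index-two subgroup of even rotations and even reflections (inside `Perm`). -/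
def dihK (n : ℕ) (h2 : 2 ∣ n) : Subgroup (Equiv.Perm (ZMod n)) where
  carrier := {σ | (∃ j, ZMod.castHom h2 (ZMod 2) j = 0 ∧ σ = Equiv.addLeft j) ∨
      ∃ a, ZMod.castHom h2 (ZMod 2) a = 0 ∧ σ = ngonReflection n a}
  one_mem' := Or.inl ⟨0, by simp, addLeft_zero_eq_one.symm⟩
  mul_mem' := by
    rintro _ _ (⟨j, hj, rfl⟩ | ⟨a, ha, rfl⟩) (⟨k, hk, rfl⟩ | ⟨b, hb, rfl⟩)
    · exact Or.inl ⟨j + k, by rw [map_add, hj, hk, add_zero], addLeft_mul j k⟩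
    · exact Or.inr ⟨j + b, by rw [map_add, hj, hb, add_zero], addLeft_mul_refl j b⟩
    · exact Or.inr ⟨a - k, by rw [map_sub, ha, hk, sub_zero], refl_mul_addLeft a k⟩
    · exact Or.inl ⟨a - b, by rw [map_sub, ha, hb, sub_zero], refl_mul_refl a b⟩
  inv_mem' := by
    rintro _ (⟨j, hj, rfl⟩ | ⟨a, ha, rfl⟩)
    · exact Or.inl ⟨-j, by rw [map_neg, hj, neg_zero], addLeft_inv j⟩
    · exact Or.inr ⟨a, ha, refl_inv a⟩

lemma support_addLeft [NeZero n] {j : ZMod n} (hj : j ≠ 0) :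
    (Equiv.addLeft j).support = Finset.univ := by
  ext x
  simp only [Equiv.Perm.mem_support, Finset.mem_univ, iff_true, Equiv.coe_addLeft]
  intro h
  exact hj (by simpa using congrArg (fun t => t - x) h)

lemma two_unit_of_odd [NeZero n] (hodd : Odd n) : IsUnit (2 : ZMod n) := by
  have h : ((2 : ℕ) : ZMod n) = (2 : ZMod n) := by norm_cast
  rw [← h, ZMod.isUnit_iff_coprime]
  exact (Nat.prime_two.coprime_iff_not_dvd).2 (by
    have := Nat.odd_iff.mp hodd; omega)

lemma support_refl_odd [NeZero n] (hodd : Odd n) (a : ZMod n) :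
    (ngonReflection n a).support.card = n - 1 := by
  obtain ⟨u, hu⟩ := two_unit_of_odd (n := n) hodd
  set x : ZMod n := ↑u⁻¹ * a with hx
  have h2x : (2 : ZMod n) * x = a := by rw [hx, ← hu, Units.mul_inv_cancel_left]
  have hsupp : (ngonReflection n a).support = Finset.univ.erase x := by
    ext y
    simp only [Equiv.Perm.mem_support, Finset.mem_erase, Finset.mem_univ, and_true]
    constructor
    · intro h hyx
      apply h
      show a - y = y
      rw [← h2x, hyx]; ring
    · intro hyx h
      apply hyx
      have hay : a - y = y := h
      have h2y : (2 : ZMod n) * y = (2 : ZMod n) * x := by rw [h2x]; linear_combination -hay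
      rw [← hu] at h2y
      exact (Units.mul_right_inj u).mp h2y
  rw [hsupp, Finset.card_erase_of_mem (Finset.mem_univ x), Finset.card_univ, ZMod.card]

lemma support_refl_even [NeZero n] (h2 : 2 ∣ n) (a : ZMod n)
    (ha : ZMod.castHom h2 (ZMod 2) a = 1) :
    (ngonReflection n a).support = Finset.univ := by
  ext y
  simp only [Equiv.Perm.mem_support, Finset.mem_univ, iff_true]
  intro h
  have hay : a - y = y := h
  have ha2 : a = 2 * y := by linear_combination hay
  have hcast := congrArg (ZMod.castHom h2 (ZMod 2)) ha2
  rw [ha, map_mul] at hcast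
  have hz : ∀ z : ZMod 2, (ZMod.castHom h2 (ZMod 2)) 2 * z = 0 := by
    intro z
    have h20 : (ZMod.castHom h2 (ZMod 2)) 2 = 0 := by
      have hc : ((2:ℕ) : ZMod n) = (2 : ZMod n) := by norm_cast
      rw [← hc, ZMod.castHom_apply, ZMod.cast_natCast h2]
      decide
    rw [h20, zero_mul]
  rw [hz] at hcast
  exact one_ne_zero hcast

lemma two_ne_zero_zmod [NeZero n] (hn : 3 ≤ n) : (2 : ZMod n) ≠ 0 := by
  have h : ((2:ℕ) : ZMod n) = (2 : ZMod n) := by norm_cast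
  rw [← h, Ne, ZMod.natCast_eq_zero_iff]
  intro hd
  have := Nat.le_of_dvd (by norm_num) hd
  omega

lemma one_ne_zero_zmod [NeZero n] (hn : 3 ≤ n) : (1 : ZMod n) ≠ 0 := by
  have h : ((1:ℕ) : ZMod n) = (1 : ZMod n) := by norm_cast
  rw [← h, Ne, ZMod.natCast_eq_zero_iff]
  intro hd
  have := Nat.le_of_dvd (by norm_num) hd
  omega

lemma rot_ne_one [NeZero n] (hn : 3 ≤ n) : ngonRotation n ≠ 1 := by
  intro h
  have h0 := congrArg (fun σ : Equiv.Perm (ZMod n) => σ 0) h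
  simp only [ngonRotation, Equiv.coe_addLeft] at h0
  exact one_ne_zero_zmod hn (by simpa using h0)

lemma rot_notMem_dihK [NeZero n] (hn : 3 ≤ n) (h2 : 2 ∣ n) :
    ngonRotation n ∉ dihK n h2 := by
  rintro (⟨j, hj, heq⟩ | ⟨a, ha, heq⟩)
  · have h0 := congrArg (fun σ : Equiv.Perm (ZMod n) => σ 0) heq
    simp only [ngonRotation, Equiv.coe_addLeft, add_zero] at h0
    rw [← h0] at hj
    rw [map_one] at hj
    exact one_ne_zero hj
  · have h0 := congrArg (fun σ : Equiv.Perm (ZMod n) => σ 0) heq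
    have h1 := congrArg (fun σ : Equiv.Perm (ZMod n) => σ 1) heq
    simp only [ngonRotation, Equiv.coe_addLeft, refl_apply, add_zero, sub_zero] at h0 h1
    rw [← h0] at h1
    apply two_ne_zero_zmod hn
    linear_combination h1

lemma permIndex_addLeft_ge [NeZero n] {j : ZMod n} (hj : j ≠ 0) :
    n / 2 ≤ permIndex (Equiv.addLeft j) := by
  have h := half_support_le_permIndex (Equiv.addLeft j)
  rwa [support_addLeft hj, Finset.card_univ, ZMod.card] at h

lemma permIndex_refl_odd [NeZero n] (hodd : Odd n) (a : ZMod n) :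
    permIndex (ngonReflection n a) = (n - 1) / 2 := by
  rw [permIndex_involution _ (refl_sq a), support_refl_odd hodd a]

lemma permIndex_refl_even_ge [NeZero n] (h2 : 2 ∣ n) {a : ZMod n}
    (ha : ZMod.castHom h2 (ZMod 2) a = 1) :
    n / 2 ≤ permIndex (ngonReflection n a) := by
  have h := half_support_le_permIndex (ngonReflection n a)
  rwa [support_refl_even h2 a ha, Finset.card_univ, ZMod.card] at h

lemma permIndex_refl_le [NeZero n] (a : ZMod n) :
    permIndex (ngonReflection n a) ≤ (if Even n then n / 2 else (n - 1) / 2) := by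
  by_cases he : Even n
  · rw [if_pos he, permIndex_involution _ (refl_sq a)]
    apply Nat.div_le_div_right
    calc (ngonReflection n a).support.card ≤ Finset.univ.card := Finset.card_le_univ _
    _ = n := by rw [Finset.card_univ, ZMod.card]
  · rw [if_neg he, permIndex_refl_odd (Nat.not_even_iff_odd.mp he) a]

lemma lower_odd [NeZero n] (hodd : Odd n) {σ : Equiv.Perm (ZMod n)}
    (hσ : σ ∈ dihedralSubgroup n) (hlt : permIndex σ < (n - 1) / 2) : σ = 1 := by
  rcases mem_dihT hσ with ⟨j, rfl⟩ | ⟨a, rfl⟩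
  · rcases eq_or_ne j 0 with rfl | hj
    · exact addLeft_zero_eq_one
    · have h := permIndex_addLeft_ge hj
      omega
  · rw [permIndex_refl_odd hodd a] at hlt
    omega

lemma lower_even [NeZero n] (h2 : 2 ∣ n) {σ : Equiv.Perm (ZMod n)}
    (hσ : σ ∈ dihedralSubgroup n) (hlt : permIndex σ < n / 2) : σ ∈ dihK n h2 := by
  rcases mem_dihT hσ with ⟨j, rfl⟩ | ⟨a, rfl⟩
  · rcases eq_or_ne j 0 with rfl | hj
    · exact Or.inl ⟨0, by simp, rfl⟩
    · have h := permIndex_addLeft_ge hj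
      omega
  · have hz : ∀ z : ZMod 2, z = 0 ∨ z = 1 := by decide
    rcases hz (ZMod.castHom h2 (ZMod 2) a) with ha | ha
    · exact Or.inr ⟨a, ha, rfl⟩
    · have h := permIndex_refl_even_ge h2 ha
      omega

end DihedralAux

open DihedralAux in
/-- The generator index of `D_n` in its natural degree-`n` action is `(n-1)/2` for `n` odd and
`n/2` for `n` even; moreover the set of reflections is a generating set attaining this bound. -/
theorem genIndex_dihedral (n : ℕ) [NeZero n] (hn : 3 ≤ n) :
    genIndex (dihedralSubgroup n) = (if Even n then n / 2 else (n - 1) / 2) ∧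
    Subgroup.closure {σ : Equiv.Perm (ZMod n) | ∃ a : ZMod n, σ = ngonReflection n a} =
      dihedralSubgroup n ∧
    ∀ a : ZMod n, permIndex (ngonReflection n a) ≤ genIndex (dihedralSubgroup n) := by
  classical
  set b := (if Even n then n / 2 else (n - 1) / 2) with hb
  have hrotmem : ngonRotation n ∈ dihedralSubgroup n :=
    Subgroup.subset_closure (Set.mem_insert _ _)
  have hmem : b ∈ {k | ∃ S : Set (Equiv.Perm (ZMod n)),
      Subgroup.closure S = dihedralSubgroup n ∧ ∀ σ ∈ S, permIndex σ ≤ k} := by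
    refine ⟨{σ : Equiv.Perm (ZMod n) | ∃ a : ZMod n, σ = ngonReflection n a},
      closure_reflections, ?_⟩
    rintro σ ⟨a, rfl⟩
    exact permIndex_refl_le a
  have hlow : ∀ k ∈ {k | ∃ S : Set (Equiv.Perm (ZMod n)),
      Subgroup.closure S = dihedralSubgroup n ∧ ∀ σ ∈ S, permIndex σ ≤ k}, b ≤ k := by
    rintro k ⟨S, hS, hk⟩
    by_contra hklt
    push_neg at hklt
    by_cases he : Even n
    · rw [hb, if_pos he] at hklt
      have h2 : 2 ∣ n := he.two_dvd
      have hsub : S ⊆ (dihK n h2 : Set _) := by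
        intro σ hσ
        exact lower_even h2 (hS ▸ Subgroup.subset_closure hσ)
          (lt_of_le_of_lt (hk σ hσ) hklt)
      have hle : dihedralSubgroup n ≤ dihK n h2 := by
        rw [← hS]
        exact (Subgroup.closure_le _).mpr hsub
      exact rot_notMem_dihK hn h2 (hle hrotmem)
    · rw [hb, if_neg he] at hklt
      have hodd : Odd n := Nat.not_even_iff_odd.mp he
      have hsub : S ⊆ ((⊥ : Subgroup (Equiv.Perm (ZMod n))) : Set _) := by
        intro σ hσ
        rw [SetLike.mem_coe, Subgroup.mem_bot]
        exact lower_odd hodd (hS ▸ Subgroup.subset_closure hσ)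
          (lt_of_le_of_lt (hk σ hσ) hklt)
      have hle : dihedralSubgroup n ≤ ⊥ := by
        rw [← hS]
        exact (Subgroup.closure_le _).mpr hsub
      exact rot_ne_one hn (Subgroup.mem_bot.mp (hle hrotmem))
  have hgen : genIndex (dihedralSubgroup n) = b :=
    le_antisymm (Nat.sInf_le hmem) (le_csInf ⟨b, hmem⟩ hlow)
  exact ⟨hgen, closure_reflections, fun a => hgen ▸ permIndex_refl_le a⟩
end

section
/- Let G ≤ S_{2n} be a transitive imprimitive group preserving a system of n blocks of size 2, with generator index 2. Then the image of G under the projection to the action on the n blocks is the full symmetric group S_n. -/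
/-- The imprimitive wreath product `C_2 ≀ S_n` of degree `2n`: the subgroup of all permutations
of `Fin n × Fin 2` preserving the partition into the `n` blocks `{i} × Fin 2` of size 2. -/
def blockSubgroup (n : ℕ) : Subgroup (Equiv.Perm (Fin n × Fin 2)) where
  carrier := {g | ∃ τ : Equiv.Perm (Fin n), ∀ p, (g p).1 = τ p.1}
  one_mem' := ⟨1, fun _ => rfl⟩
  mul_mem' := by
    rintro a b ⟨τa, ha⟩ ⟨τb, hb⟩
    exact ⟨τa * τb, fun p => by simp [Equiv.Perm.mul_apply, ha, hb]⟩
  inv_mem' := by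
    rintro g ⟨τ, h⟩
    refine ⟨τ⁻¹, fun p => ?_⟩
    have := h (g⁻¹ p)
    simp only [← Equiv.Perm.mul_apply, mul_inv_cancel, Equiv.Perm.one_apply] at this
    rw [this, ← Equiv.Perm.mul_apply, inv_mul_cancel, Equiv.Perm.one_apply]

/-- The base group `(C_2)^n` of the wreath product `C_2 ≀ S_n`: permutations fixing each block. -/
def baseSubgroup (n : ℕ) : Subgroup (Equiv.Perm (Fin n × Fin 2)) where
  carrier := {g | ∀ p, (g p).1 = p.1}
  one_mem' := fun _ => rfl
  mul_mem' := by
    intro a b ha hb p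
    rw [Equiv.Perm.mul_apply, ha, hb]
  inv_mem' := by
    intro g h p
    have := h (g⁻¹ p)
    simpa using this.symm

/-- Let `G ≤ S_{2n}` be a transitive imprimitive group preserving a system of `n` blocks of
size 2, with generator index 2. Then the image of `G` in its action on the `n` blocks is the
full symmetric group `S_n`. -/
theorem blocks_image_eq_top (n : ℕ) (G : Subgroup (Equiv.Perm (Fin n × Fin 2)))
    (htrans : ∀ a b : Fin n × Fin 2, ∃ g ∈ G, g a = b)
    (hblocks : G ≤ blockSubgroup n)
    (hgi : genIndex G = 2) :
    ∀ τ : Equiv.Perm (Fin n), ∃ g ∈ G, ∀ p : Fin n × Fin 2, (g p).1 = τ p.1 := by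
  classical
  -- permIndex formula
  have hpi : ∀ σ : Equiv.Perm (Fin n × Fin 2),
      permIndex σ = σ.support.card - σ.cycleType.card := by
    intro σ
    unfold permIndex
    congr 1
    · rw [← Equiv.Perm.sum_cycleType]; congr!
    · congr!
  -- extract a generating set of index ≤ 2
  unfold genIndex at hgi
  have hne : {k | ∃ S : Set (Equiv.Perm (Fin n × Fin 2)),
      Subgroup.closure S = G ∧ ∀ σ ∈ S, permIndex σ ≤ k}.Nonempty := by
    by_contra h
    rw [Set.not_nonempty_iff_eq_empty] at h
    rw [h, Nat.sInf_empty] at hgi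
    omega
  have hmem := Nat.sInf_mem hne
  rw [hgi] at hmem
  obtain ⟨S, hSG, hSidx⟩ := hmem
  -- the set of nontrivial block-images of generators
  set T : Set (Equiv.Perm (Fin n)) :=
    {τ | τ ≠ 1 ∧ ∃ σ ∈ S, ∀ p : Fin n × Fin 2, (σ p).1 = τ p.1} with hT
  -- every element of T is a swap
  have hswap : ∀ τ ∈ T, τ.IsSwap := by
    rintro τ ⟨hτ1, σ, hσS, hστ⟩
    have hidx : permIndex σ ≤ 2 := hSidx σ hσS
    rw [hpi] at hidx
    -- support bound : 2 * τ.support.card ≤ σ.support.card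
    have hsub : τ.support ×ˢ (Finset.univ : Finset (Fin 2)) ⊆ σ.support := by
      intro p hp
      rw [Finset.mem_product] at hp
      rw [Equiv.Perm.mem_support]
      intro hfix
      have := hστ p
      rw [hfix] at this
      exact (Equiv.Perm.mem_support.mp hp.1) this.symm
    have hcard : 2 * τ.support.card ≤ σ.support.card := by
      have := Finset.card_le_card hsub
      rwa [Finset.card_product, Finset.card_univ, Fintype.card_fin, mul_comm] at this
    -- number of cycles bound : 2 * #cycles ≤ support card
    have hcyc : 2 * σ.cycleType.card ≤ σ.support.card := by
      rw [← Equiv.Perm.sum_cycleType]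
      have := Multiset.card_nsmul_le_sum (s := σ.cycleType) (a := 2)
        (fun x hx => Equiv.Perm.two_le_of_mem_cycleType hx)
      simpa [mul_comm, smul_eq_mul] using this
    have hτ2 : τ.support.card ≤ 2 := by omega
    interval_cases h : τ.support.card
    · exact absurd (Equiv.Perm.card_support_eq_zero.mp h) hτ1
    · exact absurd h (Equiv.Perm.card_support_ne_one τ)
    · exact Equiv.Perm.card_support_eq_two.mp h
  -- every g ∈ G has a block-image in closure T
  have key : ∀ g ∈ G, ∃ τ ∈ Subgroup.closure T, ∀ p : Fin n × Fin 2, (g p).1 = τ p.1 := by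
    intro g hg
    rw [← hSG] at hg
    induction hg using Subgroup.closure_induction with
    | mem σ hσ =>
      obtain ⟨τ, hτ⟩ := hblocks (hSG ▸ Subgroup.subset_closure hσ)
      by_cases h1 : τ = 1
      · exact ⟨1, Subgroup.one_mem _, fun p => by simpa [h1] using hτ p⟩
      · exact ⟨τ, Subgroup.subset_closure ⟨h1, σ, hσ, hτ⟩, hτ⟩
    | one => exact ⟨1, Subgroup.one_mem _, fun _ => rfl⟩
    | mul a b _ _ ha hb =>
      obtain ⟨τa, hma, ha⟩ := ha
      obtain ⟨τb, hmb, hb⟩ := hb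
      exact ⟨τa * τb, Subgroup.mul_mem _ hma hmb, fun p => by
        simp [Equiv.Perm.mul_apply, ha, hb]⟩
    | inv a _ ha =>
      obtain ⟨τ, hm, ha⟩ := ha
      refine ⟨τ⁻¹, Subgroup.inv_mem _ hm, fun p => ?_⟩
      have := ha (a⁻¹ p)
      simp only [← Equiv.Perm.mul_apply, mul_inv_cancel, Equiv.Perm.one_apply] at this
      rw [this, ← Equiv.Perm.mul_apply, inv_mul_cancel, Equiv.Perm.one_apply]
  -- closure T acts transitively on Fin n
  have : MulAction.IsPretransitive (Subgroup.closure T) (Fin n) := by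
    constructor
    intro i j
    obtain ⟨g, hg, hgij⟩ := htrans (i, 0) (j, 0)
    obtain ⟨τ, hτm, hτ⟩ := key g hg
    refine ⟨⟨τ, hτm⟩, ?_⟩
    have := hτ (i, 0)
    rw [hgij] at this
    exact this.symm
  have htop : Subgroup.closure T = ⊤ := closure_of_isSwap_of_isPretransitive hswap
  -- conclude
  intro τ
  have hτ : τ ∈ Subgroup.closure T := htop ▸ Subgroup.mem_top τ
  induction hτ using Subgroup.closure_induction with
  | mem τ hτ =>
    obtain ⟨-, σ, hσS, hστ⟩ := hτ
    exact ⟨σ, hSG ▸ Subgroup.subset_closure hσS, hστ⟩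
  | one => exact ⟨1, Subgroup.one_mem _, fun _ => rfl⟩
  | mul a b _ _ ha hb =>
    obtain ⟨ga, hma, ha⟩ := ha
    obtain ⟨gb, hmb, hb⟩ := hb
    exact ⟨ga * gb, Subgroup.mul_mem _ hma hmb, fun p => by
      simp [Equiv.Perm.mul_apply, ha, hb]⟩
  | inv a _ ha =>
    obtain ⟨g, hm, ha⟩ := ha
    refine ⟨g⁻¹, Subgroup.inv_mem _ hm, fun p => ?_⟩
    have := ha (g⁻¹ p)
    simp only [← Equiv.Perm.mul_apply, mul_inv_cancel, Equiv.Perm.one_apply] at this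
    rw [this, ← Equiv.Perm.mul_apply, inv_mul_cancel, Equiv.Perm.one_apply]
end

section
/- Let f ∈ ℤ[X] be a nonzero polynomial and N the largest positive integer dividing f(m) for all m ∈ ℤ. Then there exist integers m_1 ≥ 1 and m_2 such that N divides every coefficient of f(m_1·X + m_2) ∈ ℤ[X] and no prime divides all values of the polynomial f(m_1·X + m_2)/N at integer arguments. -/
open Polynomial

/-- Let `f ∈ ℤ[X]` be nonzero and `N` the largest positive integer dividing `f(m)` for all
`m ∈ ℤ` (the fixed divisor of `f`). Then there exist integers `m₁ ≥ 1` and `m₂` such that `N`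
divides every coefficient of `f(m₁·X + m₂)`, and no prime `q` divides all the integer values
of the polynomial `f(m₁·X + m₂)/N` (equivalently, for each prime `q` there is an integer `x`
with `q·N ∤ f(m₁·x + m₂)`). -/
theorem fixed_divisor_normalization (f : ℤ[X]) (hf : f ≠ 0) (N : ℕ) (hNpos : 0 < N)
    (hdvd : ∀ m : ℤ, (N : ℤ) ∣ f.eval m)
    (hmax : ∀ M : ℕ, 0 < M → (∀ m : ℤ, (M : ℤ) ∣ f.eval m) → M ≤ N) :
    ∃ (m₁ m₂ : ℤ), 1 ≤ m₁ ∧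
      (∀ i : ℕ, (N : ℤ) ∣ (f.comp (C m₁ * X + C m₂)).coeff i) ∧
      ∀ q : ℕ, q.Prime → ∃ x : ℤ, ¬ ((q : ℤ) * N ∣ f.eval (m₁ * x + m₂)) := by
  haveI : NeZero N := ⟨hNpos.ne'⟩
  -- For every prime q there is some m with ¬ q·N ∣ f(m)
  have key : ∀ q : ℕ, ∃ m : ℤ, q.Prime → ¬ ((q : ℤ) * N ∣ f.eval m) := by
    intro q
    by_cases hq : q.Prime
    · by_contra hcon
      push_neg at hcon
      have hall : ∀ m : ℤ, ((q * N : ℕ) : ℤ) ∣ f.eval m := by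
        intro m; push_cast; exact (hcon m).2
      have hle := hmax (q * N) (Nat.mul_pos hq.pos hNpos) hall
      nlinarith [hq.two_le, hNpos]
    · exact ⟨0, fun h => absurd h hq⟩
  choose mq hmq using key
  set t := N.primeFactors with ht
  set s : ℕ → ℕ := fun q => q ^ (N.factorization q + 1) with hs
  set a : ℕ → ℕ := fun q => (mq q % (s q : ℤ)).toNat with ha
  have hsne : ∀ q ∈ t, s q ≠ 0 := fun q hq =>
    pow_ne_zero _ (Nat.prime_of_mem_primeFactors hq).ne_zero
  have hpp : Set.Pairwise ↑t (Function.onFun Nat.Coprime s) := by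
    intro p hp q hq hne
    exact Nat.Coprime.pow _ _
      ((Nat.coprime_primes (Nat.prime_of_mem_primeFactors hp)
        (Nat.prime_of_mem_primeFactors hq)).mpr hne)
  obtain ⟨k, hk⟩ := Nat.chineseRemainderOfFinset a s t hsne hpp
  -- m₂ := k is congruent to mq q modulo q^(e_q+1) for each prime q ∣ N
  have hcong : ∀ q ∈ t, ((s q : ℕ) : ℤ) ∣ (k : ℤ) - mq q := by
    intro q hq
    have hsq0 : ((s q : ℕ) : ℤ) ≠ 0 := by exact_mod_cast hsne q hq
    have ha' : ((a q : ℕ) : ℤ) = mq q % (s q : ℤ) :=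
      Int.toNat_of_nonneg (Int.emod_nonneg _ hsq0)
    have d1 : ((s q : ℕ) : ℤ) ∣ (k : ℤ) - (a q : ℤ) := by
      have := (hk q hq).symm.dvd
      simpa using this
    have d2 : ((s q : ℕ) : ℤ) ∣ (a q : ℤ) - mq q := by
      rw [ha']
      refine ⟨-(mq q / (s q : ℤ)), ?_⟩
      rw [Int.emod_def]; ring
    have := dvd_add d1 d2
    simpa using this
  refine ⟨(N : ℤ), (k : ℤ), by exact_mod_cast hNpos, ?_, ?_⟩
  · -- coefficient divisibility via reduction mod N
    intro i
    have h0 : (f.comp (C (N : ℤ) * X + C (k : ℤ))).map (Int.castRingHom (ZMod N)) = 0 := by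
      have hN0 : (Int.castRingHom (ZMod N)) (N : ℤ) = 0 := by
        simpa using (ZMod.intCast_zmod_eq_zero_iff_dvd (N : ℤ) N).mpr dvd_rfl
      rw [Polynomial.map_comp, Polynomial.map_add, Polynomial.map_mul, Polynomial.map_C,
        Polynomial.map_X, Polynomial.map_C, hN0, C_0, zero_mul, zero_add, comp_C]
      have heval : (f.map (Int.castRingHom (ZMod N))).eval ((Int.castRingHom (ZMod N)) (k : ℤ)) =
          (Int.castRingHom (ZMod N)) (f.eval (k : ℤ)) := by
        rw [Polynomial.eval_map, Polynomial.eval₂_at_apply]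
      rw [heval]
      have : (Int.castRingHom (ZMod N)) (f.eval (k : ℤ)) = 0 := by
        simpa using (ZMod.intCast_zmod_eq_zero_iff_dvd _ N).mpr (hdvd (k : ℤ))
      rw [this, C_0]
    rw [← ZMod.intCast_zmod_eq_zero_iff_dvd]
    have := congrArg (fun p => p.coeff i) h0
    simpa [Polynomial.coeff_map] using this
  · intro q hq
    by_cases hqN : q ∣ N
    · -- case q ∣ N : take x = 0
      refine ⟨0, ?_⟩
      have hqt : q ∈ t := Nat.mem_primeFactors.mpr ⟨hq, hqN, hNpos.ne'⟩
      set e := N.factorization q with he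
      set u := N / q ^ e with hu'
      have hu : N = q ^ e * u := (Nat.ordProj_mul_ordCompl_eq_self N q).symm
      have hqu : ¬ q ∣ u := Nat.not_dvd_ordCompl hq hNpos.ne'
      have hNZ : (N : ℤ) = (q : ℤ) ^ e * u := by exact_mod_cast congrArg (Nat.cast : ℕ → ℤ) hu
      have hqp : Prime (q : ℤ) := Nat.prime_iff_prime_int.mp hq
      have lemA : ∀ m : ℤ, ¬ ((q : ℤ) * N ∣ f.eval m) → ¬ ((q : ℤ) ^ (e + 1) ∣ f.eval m) := by
        intro m hm hdv
        obtain ⟨tt, htt⟩ := hdvd m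
        obtain ⟨ss, hss⟩ := hdv
        apply hm
        have hq0 : ((q : ℤ)) ^ e ≠ 0 := pow_ne_zero _ (by exact_mod_cast hq.ne_zero)
        have h1 : (q : ℤ) ^ e * ((u : ℤ) * tt) = (q : ℤ) ^ e * ((q : ℤ) * ss) := by
          rw [← mul_assoc, ← hNZ, ← htt, hss]; ring
        have h2 : (u : ℤ) * tt = (q : ℤ) * ss := mul_left_cancel₀ hq0 h1
        rcases hqp.dvd_mul.mp ⟨ss, h2⟩ with h | h
        · exact absurd (by exact_mod_cast h) hqu
        · obtain ⟨r, hr⟩ := h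
          exact ⟨r, by rw [htt, hr]; ring⟩
      have hA := lemA (mq q) (hmq q hq)
      have hdiff : (q : ℤ) ^ (e + 1) ∣ f.eval (k : ℤ) - f.eval (mq q) := by
        have := hcong q hqt
        have h2 : ((s q : ℕ) : ℤ) = (q : ℤ) ^ (e + 1) := by
          show ((q ^ (e + 1) : ℕ) : ℤ) = (q : ℤ) ^ (e + 1)
          push_cast; ring
        rw [h2] at this
        exact dvd_trans this (Polynomial.sub_dvd_eval_sub _ _ f)
      have hk' : ¬ ((q : ℤ) ^ (e + 1) ∣ f.eval (k : ℤ)) := by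
        intro h
        exact hA (by simpa using dvd_sub h hdiff)
      intro hcon
      have : (q : ℤ) ^ (e + 1) ∣ f.eval ((N : ℤ) * 0 + (k : ℤ)) := by
        refine dvd_trans ?_ hcon
        rw [hNZ]; exact ⟨(u : ℤ), by ring⟩
      simp only [mul_zero, zero_add] at this
      exact hk' this
    · -- case q ∤ N
      by_contra hcon
      push_neg at hcon
      have hnco : Nat.Coprime q N := (Nat.Prime.coprime_iff_not_dvd hq).mpr hqN
      have hco : IsCoprime (q : ℤ) (N : ℤ) := Nat.isCoprime_iff_coprime.mpr hnco
      obtain ⟨uu, vv, huv⟩ := hco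
      have hall : ∀ m : ℤ, ((q * N : ℕ) : ℤ) ∣ f.eval m := by
        intro m
        set x := vv * (m - (k : ℤ)) with hx
        have hxq : (q : ℤ) ∣ (N : ℤ) * x + (k : ℤ) - m := by
          refine ⟨-uu * (m - (k : ℤ)), ?_⟩
          rw [hx]
          linear_combination (m - (k : ℤ)) * huv
        have h1 : (q : ℤ) ∣ f.eval ((N : ℤ) * x + (k : ℤ)) :=
          dvd_trans (dvd_mul_right _ _) (hcon x)
        have h2 : (q : ℤ) ∣ f.eval ((N : ℤ) * x + (k : ℤ)) - f.eval m :=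
          dvd_trans hxq (Polynomial.sub_dvd_eval_sub _ _ f)
        have h3 : (q : ℤ) ∣ f.eval m := by simpa using dvd_sub h1 h2
        push_cast
        exact (Nat.isCoprime_iff_coprime.mpr hnco).mul_dvd h3 (hdvd m)
      have hle := hmax (q * N) (Nat.mul_pos hq.pos hNpos) hall
      nlinarith [hq.two_le, hNpos]
end
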